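/- arXiv:2106.07298 — 4 statements merged into one kernel-verified Lean document; each statement's English description precedes it below -/
import Mathlib

section
/- There exists a constant C_k > 0 (depending only on k) such that for every irrational x ∈ (0,1): the k-Brjuno series Σ_{n≥0}(β_{n-1}(x))^k log(1/Gⁿ(x)) converges if and only if Σ_{n≥0} (log q_{n+1}(x))/(q_n(x))^k converges, and when both converge their difference is bounded in absolute value by C_k. -/
open Finset Filter

noncomputable def gaussMap (x : ℝ) : ℝ := Int.fract (1 / x)

/-- `betaP x n` is β_{n-1}(x) = ∏_{i=0}^{n-1} Gⁱ(x), with `betaP x 0 = 1`. -/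
noncomputable def betaP (x : ℝ) (n : ℕ) : ℝ := ∏ i ∈ Finset.range n, gaussMap^[i] x

/-- the (n+1)-st partial quotient a_{n+1} = ⌊1/Gⁿ(x)⌋ of the regular continued fraction. -/
noncomputable def cfDigit (x : ℝ) (n : ℕ) : ℤ := ⌊1 / gaussMap^[n] x⌋

/-- `convAux x n = ((pₙ, qₙ), (pₙ₋₁, qₙ₋₁))`, the convergents of the regular continued
fraction of `x`, with `p₋₁ = 1, q₋₁ = 0, p₀ = 0, q₀ = 1`. -/
noncomputable def convAux (x : ℝ) : ℕ → (ℤ × ℤ) × (ℤ × ℤ)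
  | 0 => ((0, 1), (1, 0))
  | n + 1 =>
      ((cfDigit x n * (convAux x n).1.1 + (convAux x n).2.1,
        cfDigit x n * (convAux x n).1.2 + (convAux x n).2.2),
       (convAux x n).1)

/-- numerator pₙ of the n-th principal convergent of `x`. -/
noncomputable def pConv (x : ℝ) (n : ℕ) : ℤ := (convAux x n).1.1

/-- denominator qₙ of the n-th principal convergent of `x`. -/
noncomputable def qConv (x : ℝ) (n : ℕ) : ℤ := (convAux x n).1.2

section Aux

variable {x : ℝ}

/-- one Gauss step preserves irrationality and (0,1). -/
lemma gauss_step {y : ℝ} (hy : Irrational y) (h0 : 0 < y) (h1 : y < 1) :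
    Irrational (gaussMap y) ∧ 0 < gaussMap y ∧ gaussMap y < 1 := by
  have hinv : Irrational (1 / y) := by simpa [one_div] using hy.inv
  have hirr : Irrational (gaussMap y) := by
    have := hinv.sub_intCast ⌊1 / y⌋
    rwa [show (1:ℝ) / y - ⌊1 / y⌋ = gaussMap y from rfl] at this
  exact ⟨hirr, lt_of_le_of_ne (Int.fract_nonneg _) (Ne.symm hirr.ne_zero),
    Int.fract_lt_one _⟩

lemma gauss_orbit (hx : Irrational x) (h0 : 0 < x) (h1 : x < 1) (n : ℕ) :
    Irrational (gaussMap^[n] x) ∧ 0 < gaussMap^[n] x ∧ gaussMap^[n] x < 1 := by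
  induction n with
  | zero => exact ⟨hx, h0, h1⟩
  | succ n ih =>
    rw [Function.iterate_succ_apply']
    exact gauss_step ih.1 ih.2.1 ih.2.2


lemma one_le_cfDigit (hx : Irrational x) (h0 : 0 < x) (h1 : x < 1) (n : ℕ) :
    1 ≤ cfDigit x n := by
  obtain ⟨-, hp, hl⟩ := gauss_orbit hx h0 h1 n
  have : (1:ℝ) ≤ 1 / gaussMap^[n] x := one_le_one_div hp hl.le
  exact_mod_cast Int.le_floor.mpr (by exact_mod_cast this)

lemma cfDigit_le (n : ℕ) : (cfDigit x n : ℝ) ≤ 1 / gaussMap^[n] x := Int.floor_le _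

lemma inv_orbit_eq (n : ℕ) :
    1 / gaussMap^[n] x = (cfDigit x n : ℝ) + gaussMap^[n+1] x := by
  rw [Function.iterate_succ_apply']
  show 1 / gaussMap^[n] x = (⌊1 / gaussMap^[n] x⌋ : ℝ) + Int.fract (1 / gaussMap^[n] x)
  rw [Int.fract]; ring

lemma qConv_zero : qConv x 0 = 1 := rfl

lemma qConv_succ (n : ℕ) :
    qConv x (n+1) = cfDigit x n * qConv x n + (convAux x n).2.2 := rfl

lemma convAux_snd (n : ℕ) : (convAux x (n+1)).2.2 = qConv x n := rfl

lemma qConv_pos_mono (hx : Irrational x) (h0 : 0 < x) (h1 : x < 1) :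
    ∀ n : ℕ, 1 ≤ qConv x n ∧ qConv x n ≤ qConv x (n+1) ∧
      0 ≤ (convAux x n).2.2 ∧ (convAux x n).2.2 ≤ qConv x n := by
  intro n
  induction n with
  | zero =>
    refine ⟨le_refl _, ?_, by norm_num [convAux], by norm_num [convAux, qConv]⟩
    have := one_le_cfDigit hx h0 h1 0
    rw [qConv_succ, qConv_zero]
    show (1:ℤ) ≤ cfDigit x 0 * 1 + (0:ℤ)
    omega
  | succ n ih =>
    obtain ⟨h1n, h2n, h3n, h4n⟩ := ih
    have ha := one_le_cfDigit hx h0 h1 (n+1)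
    have hq1 : 1 ≤ qConv x (n+1) := le_trans h1n h2n
    refine ⟨hq1, ?_, by rw [convAux_snd]; omega, by rw [convAux_snd]; exact h2n⟩
    rw [qConv_succ (n+1), convAux_snd]
    nlinarith

lemma qConv_growth (hx : Irrational x) (h0 : 0 < x) (h1 : x < 1) :
    ∀ n : ℕ, 2 ^ (n / 2) ≤ qConv x n := by
  have key : ∀ n : ℕ, 2 ^ (n / 2) ≤ qConv x n ∧ 2 ^ ((n+1) / 2) ≤ qConv x (n+1) := by
    intro n
    induction n with
    | zero =>
      exact ⟨by rw [qConv_zero]; norm_num, by simpa using (qConv_pos_mono hx h0 h1 1).1⟩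
    | succ n ih =>
      refine ⟨ih.2, ?_⟩
      have ha := one_le_cfDigit hx h0 h1 (n+1)
      obtain ⟨h1n, h2n, h3n, h4n⟩ := qConv_pos_mono hx h0 h1 n
      have hq1 : 1 ≤ qConv x (n+1) := le_trans h1n h2n
      have hrec : qConv x (n+2) = cfDigit x (n+1) * qConv x (n+1) + qConv x n := by
        rw [qConv_succ (n+1), convAux_snd]
      have h2 : 2 * qConv x n ≤ qConv x (n+2) := by rw [hrec]; nlinarith
      have hdiv : (n + 2) / 2 = n / 2 + 1 := by omega
      calc (2:ℤ) ^ ((n+2)/2) = 2 * 2 ^ (n/2) := by rw [hdiv]; ring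
        _ ≤ 2 * qConv x n := by linarith [ih.1]
        _ ≤ qConv x (n+2) := h2
  exact fun n => (key n).1

/-- the "full denominator" Rₙ = qₙ + qₙ₋₁ Gⁿ(x); then β_{n-1} = 1/Rₙ. -/
noncomputable def fullDen (x : ℝ) (n : ℕ) : ℝ :=
  (qConv x n : ℝ) + ((convAux x n).2.2 : ℝ) * gaussMap^[n] x

lemma betaP_mul_fullDen (hx : Irrational x) (h0 : 0 < x) (h1 : x < 1) (n : ℕ) :
    betaP x n * fullDen x n = 1 := by
  induction n with
  | zero => simp [betaP, fullDen, qConv, convAux]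
  | succ n ih =>
    have hXpos : 0 < gaussMap^[n] x := (gauss_orbit hx h0 h1 n).2.1
    have hXne : gaussMap^[n] x ≠ 0 := ne_of_gt hXpos
    have hmul : ((cfDigit x n : ℝ) + gaussMap^[n+1] x) * gaussMap^[n] x = 1 := by
      rw [← inv_orbit_eq, one_div, inv_mul_cancel₀ hXne]
    have hbeta : betaP x (n+1) = betaP x n * gaussMap^[n] x := by
      rw [betaP, betaP, Finset.prod_range_succ]
    have hR : fullDen x (n+1) * gaussMap^[n] x = fullDen x n := by
      rw [fullDen, fullDen, qConv_succ, convAux_snd]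
      push_cast
      linear_combination (qConv x n : ℝ) * hmul
    rw [hbeta, show betaP x n * gaussMap^[n] x * fullDen x (n+1)
        = betaP x n * (fullDen x (n+1) * gaussMap^[n] x) from by ring, hR, ih]

lemma one_sub_pow_le' {t : ℝ} (h0 : 0 ≤ t) (h1 : t ≤ 1) (k : ℕ) :
    1 - t ^ k ≤ k * (1 - t) := by
  induction k with
  | zero => simp
  | succ k ih =>
    have ht : t ^ k ≤ 1 := pow_le_one₀ h0 h1
    have htk : 0 ≤ t ^ k := pow_nonneg h0 k
    push_cast
    have h2 : t * (1 - t ^ k) ≤ 1 - t ^ k :=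
      mul_le_of_le_one_left (by linarith) h1
    have h3 : (1:ℝ) - t ^ (k+1) = (1 - t) + t * (1 - t ^ k) := by ring
    nlinarith [ih]
  
lemma mul_log_one_div_le_two {y : ℝ} (h0 : 0 < y) (h1 : y ≤ 1) :
    y * Real.log (1 / y) ≤ 2 := by
  have hs : 0 < Real.sqrt y := Real.sqrt_pos.mpr h0
  have hlog : Real.log (1 / y) ≤ 2 / Real.sqrt y := by
    have h2 : (1 : ℝ) / y = (1 / Real.sqrt y) ^ 2 := by
      rw [div_pow, one_pow, Real.sq_sqrt h0.le]
    rw [h2, Real.log_pow]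
    have := Real.log_le_sub_one_of_pos (show (0:ℝ) < 1 / Real.sqrt y from by positivity)
    push_cast
    calc 2 * Real.log (1 / Real.sqrt y) ≤ 2 * (1 / Real.sqrt y - 1) := by linarith
      _ ≤ 2 / Real.sqrt y := by rw [mul_sub, mul_one_div]; linarith
  calc y * Real.log (1 / y) ≤ y * (2 / Real.sqrt y) := by
        apply mul_le_mul_of_nonneg_left hlog h0.le
    _ = 2 * (y / Real.sqrt y) := by ring
    _ = 2 * Real.sqrt y := by rw [Real.div_sqrt]
    _ ≤ 2 := by
        nlinarith [Real.sqrt_le_one.mpr h1]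

lemma log_le_two_sqrt {y : ℝ} (h1 : 1 ≤ y) : Real.log y ≤ 2 * Real.sqrt y := by
  have h0 : (0:ℝ) < y := lt_of_lt_of_le one_pos h1
  have hs : 0 < Real.sqrt y := Real.sqrt_pos.mpr h0
  have h2 : y = (Real.sqrt y) ^ 2 := (Real.sq_sqrt h0.le).symm
  calc Real.log y = 2 * Real.log (Real.sqrt y) := by
        conv_lhs => rw [h2]
        rw [Real.log_pow]; push_cast; ring
    _ ≤ 2 * (Real.sqrt y - 1) := by
        have := Real.log_le_sub_one_of_pos hs
        linarith
    _ ≤ 2 * Real.sqrt y := by linarith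

set_option maxHeartbeats 1000000 in
/-- abstract version of the single-term comparison bound. -/
lemma abstract_bound {k : ℕ} (hk : 1 ≤ k) {X Q Q1 P R R1 a : ℝ}
    (hX0 : 0 < X) (hX1 : X < 1)
    (hQ : 1 ≤ Q) (hQQ1 : Q ≤ Q1) (hP0 : 0 ≤ P) (hPQ : P ≤ Q)
    (hRdef : R = Q + P * X) (hQ1R1 : Q1 ≤ R1) (hR1le : R1 ≤ 2 * Q1)
    (ha1 : 1 ≤ a) (haX : a ≤ 1 / X) (hQ1eq : Q1 = a * Q + P)
    (hXR : X * R1 = R) :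
    |(1/R) ^ k * Real.log (1 / X) - Real.log Q1 / Q ^ k|
      ≤ (3 * k + 4) / Real.sqrt Q := by
  have hQpos : (0:ℝ) < Q := by linarith
  have hQ1pos : (0:ℝ) < Q1 := by linarith
  have hPX0 : 0 ≤ P * X := mul_nonneg hP0 hX0.le
  have hPX1 : P * X ≤ Q := (mul_le_of_le_one_right hP0 hX1.le).trans hPQ
  have hQR : Q ≤ R := by rw [hRdef]; linarith
  have hRpos : (0:ℝ) < R := by linarith
  have hRle : R ≤ 2 * Q := by rw [hRdef]; linarith
  have hR1pos : (0:ℝ) < R1 := by linarith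
  have hsq : 0 < Real.sqrt Q := Real.sqrt_pos.mpr hQpos
  have hsqQ : Real.sqrt Q * Real.sqrt Q = Q := Real.mul_self_sqrt hQpos.le
  have hsq_le : Real.sqrt Q ≤ Q := by
    have h := Real.sqrt_le_sqrt (show Q ≤ Q^2 by nlinarith [mul_nonneg hQpos.le (sub_nonneg.mpr hQ)])
    rwa [Real.sqrt_sq hQpos.le] at h
  have hlog2 : Real.log 2 ≤ 1 := by
    have := Real.log_le_sub_one_of_pos (show (0:ℝ) < 2 by norm_num)
    linarith
  -- log abbreviations
  set A : ℝ := Real.log Q with hA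
  set A1 : ℝ := Real.log Q1 with hA1
  set B : ℝ := Real.log R with hB
  set B1 : ℝ := Real.log R1 with hB1
  have hA0 : 0 ≤ A := Real.log_nonneg hQ
  have hA10 : 0 ≤ A1 := Real.log_nonneg (by linarith)
  have hAB : A ≤ B := Real.log_le_log hQpos hQR
  have hB2 : B ≤ Real.log 2 + A := by
    have := Real.log_le_log hRpos hRle
    rwa [Real.log_mul (by norm_num) (ne_of_gt hQpos)] at this
  have hA1B1 : A1 ≤ B1 := Real.log_le_log hQ1pos hQ1R1
  have hB12 : B1 ≤ Real.log 2 + A1 := by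
    have := Real.log_le_log hR1pos hR1le
    rwa [Real.log_mul (by norm_num) (ne_of_gt hQ1pos)] at this
  have hAA1 : A ≤ A1 := Real.log_le_log hQpos hQQ1
  -- log(1/X) = B1 - B
  have h1X : (1:ℝ) / X = R1 / R := by
    rw [← hXR]
    field_simp
  have hlogX : Real.log (1 / X) = B1 - B := by
    rw [h1X, Real.log_div (ne_of_gt hR1pos) (ne_of_gt hRpos)]
  have hlogX0 : 0 ≤ Real.log (1/X) := Real.log_nonneg (one_le_one_div hX0 hX1.le)
  -- b = (1/R)^k bounds
  have hbpos : 0 < (1/R) ^ k := pow_pos (by positivity) k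
  have hb_le : (1/R) ^ k ≤ (1/Q) ^ k := by
    apply pow_le_pow_left₀ (by positivity)
    exact one_div_le_one_div_of_le hQpos hQR
  have hQk_le : (1/Q) ^ k ≤ 1/Q := by
    calc (1/Q) ^ k ≤ (1/Q) ^ 1 :=
          pow_le_pow_of_le_one (by positivity) (by rw [div_le_one hQpos]; exact hQ) hk
      _ = 1/Q := pow_one _
  -- Term 1 : |b * (u1 - u)| ≤ 1/Q
  have hT1 : |(1/R)^k * ((B1 - A1) - (B - A))| ≤ 1/Q := by
    rw [abs_mul, abs_of_pos hbpos]
    have habs : |(B1 - A1) - (B - A)| ≤ 1 := by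
      rw [abs_le]; constructor <;> linarith
    calc (1/R)^k * |(B1 - A1) - (B - A)| ≤ (1/Q)^k * 1 := by
          apply mul_le_mul hb_le habs (abs_nonneg _) (by positivity)
      _ ≤ 1/Q := by rw [mul_one]; exact hQk_le
  -- Term 2 : 0 ≤ (1/Q^k - b)*(A1 - A) ≤ 3k/Q
  have hbQ : (1/R)^k ≤ 1/Q^k := by rw [← one_div_pow]; exact hb_le
  have hT2 : |(1/Q^k - (1/R)^k) * (A1 - A)| ≤ 3 * k / Q := by
    have ht0 : (0:ℝ) ≤ Q/R := by positivity
    have ht1 : Q/R ≤ 1 := by rw [div_le_one hRpos]; exact hQR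
    have h1t : 1 - Q/R ≤ X := by
      rw [show 1 - Q/R = (R - Q)/R from by field_simp, div_le_iff₀ hRpos]
      have : R - Q = P * X := by rw [hRdef]; ring
      rw [this]
      have : P * X ≤ R * X := mul_le_mul_of_nonneg_right (hPQ.trans hQR) hX0.le
      linarith
    have hpow := one_sub_pow_le' ht0 ht1 k
    have hfact : (1/R:ℝ) = (1/Q) * (Q/R) := by field_simp
    have hsplit : 1/Q^k - (1/R)^k = (1/Q)^k * (1 - (Q/R)^k) := by
      rw [hfact, mul_pow, ← one_div_pow]
      ring
    have hdiffle : 1/Q^k - (1/R)^k ≤ (1/Q)^k * (k * X) := by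
      rw [hsplit]
      apply mul_le_mul_of_nonneg_left _ (by positivity)
      calc 1 - (Q/R)^k ≤ k * (1 - Q/R) := hpow
        _ ≤ k * X := by
            apply mul_le_mul_of_nonneg_left h1t (by positivity)
    have hdiff0 : 0 ≤ 1/Q^k - (1/R)^k := by linarith [hbQ]
    have hA1A : A1 - A ≤ Real.log 2 + Real.log (1/X) := by
      have hQ1le : Q1 ≤ (2/X) * Q := by
        rw [div_mul_eq_mul_div, le_div_iff₀ hX0]
        have haX1 : a * X ≤ 1 := (le_div_iff₀ hX0).mp haX
        have e : Q1 * X = (a*X)*Q + P*X := by rw [hQ1eq]; ring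
        have h2 : (a*X)*Q ≤ 1*Q := mul_le_mul_of_nonneg_right haX1 hQpos.le
        rw [e]; linarith
      have h2X : Real.log Q1 ≤ Real.log ((2/X) * Q) := Real.log_le_log hQ1pos hQ1le
      rw [Real.log_mul (by positivity) (ne_of_gt hQpos), show (2:ℝ)/X = 2 * (1/X) by ring,
        Real.log_mul (by norm_num) (by positivity)] at h2X
      rw [hA1, hA]
      linarith
    have hA1A0 : 0 ≤ A1 - A := by linarith
    rw [abs_of_nonneg (mul_nonneg hdiff0 hA1A0)]
    have hXlog : X * Real.log (1/X) ≤ 2 := mul_log_one_div_le_two hX0 hX1.le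
    calc (1/Q^k - (1/R)^k) * (A1 - A) ≤ ((1/Q)^k * (k * X)) * (Real.log 2 + Real.log (1/X)) := by
          apply mul_le_mul hdiffle hA1A hA1A0 (by positivity)
      _ = (1/Q)^k * (k * (X * Real.log 2 + X * Real.log (1/X))) := by ring
      _ ≤ (1/Q)^k * (k * (1 + 2)) := by
          apply mul_le_mul_of_nonneg_left _ (by positivity)
          apply mul_le_mul_of_nonneg_left _ (by positivity)
          have : X * Real.log 2 ≤ 1 :=
            (mul_le_of_le_one_left (Real.log_nonneg one_le_two) hX1.le).trans hlog2
          linarith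
      _ = 3 * k * (1/Q)^k := by ring
      _ ≤ 3 * k * (1/Q) := by
          apply mul_le_mul_of_nonneg_left hQk_le (by positivity)
      _ = 3 * k / Q := by ring
  -- Term 3 : A/Q^k ≤ 2/√Q
  have hT3 : |A / Q ^ k| ≤ 2 / Real.sqrt Q := by
    rw [abs_of_nonneg (by positivity)]
    have hQQk : Q ≤ Q ^ k := le_self_pow₀ hQ (by omega)
    have hAle : A ≤ 2 * Real.sqrt Q := log_le_two_sqrt hQ
    calc A / Q ^ k ≤ A / Q := by
          apply div_le_div_of_nonneg_left hA0 hQpos hQQk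
      _ ≤ (2 * Real.sqrt Q) / Q := by gcongr
      _ = 2 / Real.sqrt Q := by
          rw [div_eq_div_iff hQpos.ne' hsq.ne', mul_assoc, hsqQ]
  -- combine
  have hident : (1/R)^k * Real.log (1/X) - A1/Q^k
      = ((1/R)^k*((B1-A1)-(B-A)) - (1/Q^k - (1/R)^k)*(A1-A)) - A/Q^k := by
    rw [hlogX]; ring
  rw [hA1, hA] at hident
  rw [hident]
  have hq_inv : (1:ℝ)/Q ≤ 1/Real.sqrt Q :=
    one_div_le_one_div_of_le hsq hsq_le
  calc |((1/R)^k*((B1-A1)-(B-A)) - (1/Q^k - (1/R)^k)*(A1-A)) - A/Q^k|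
      ≤ |(1/R)^k*((B1-A1)-(B-A)) - (1/Q^k - (1/R)^k)*(A1-A)| + |A/Q^k| := abs_sub _ _
    _ ≤ |(1/R)^k*((B1-A1)-(B-A))| + |(1/Q^k - (1/R)^k)*(A1-A)| + |A/Q^k| := by
        have := abs_sub ((1/R)^k*((B1-A1)-(B-A))) ((1/Q^k - (1/R)^k)*(A1-A))
        linarith
    _ ≤ 1/Q + 3*k/Q + 2/Real.sqrt Q := by
        have h1 := hT1; have h2 := hT2; have h3 := hT3
        rw [hA1, hA] at h2
        rw [hA] at h3
        linarith
    _ ≤ (3 * k + 4) / Real.sqrt Q := by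
        have hk0 : (0:ℝ) ≤ (k:ℝ) := Nat.cast_nonneg k
        have h3k : 3*(k:ℝ)/Q ≤ 3*k/Real.sqrt Q := by
          apply div_le_div_of_nonneg_left (by positivity) hsq hsq_le
        have h1Q : 1/Q ≤ 1/Real.sqrt Q := hq_inv
        rw [show ((3:ℝ) * k + 4) / Real.sqrt Q
            = 3*k/Real.sqrt Q + 1/Real.sqrt Q + 1/Real.sqrt Q + 2/Real.sqrt Q from by ring]
        have : (0:ℝ) ≤ 1/Real.sqrt Q := by positivity
        linarith

lemma key_bound {x : ℝ} (hx : Irrational x) (h0 : 0 < x) (h1 : x < 1) {k : ℕ} (hk : 1 ≤ k)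
    (n : ℕ) :
    |betaP x n ^ k * Real.log (1 / gaussMap^[n] x)
      - Real.log (qConv x (n+1) : ℝ) / (qConv x n : ℝ) ^ k|
    ≤ (3 * k + 4 : ℝ) / Real.sqrt (qConv x n : ℝ) := by
  obtain ⟨hXirr, hX0, hX1⟩ := gauss_orbit hx h0 h1 n
  obtain ⟨hX1irr, hX10, hX11⟩ := gauss_orbit hx h0 h1 (n+1)
  obtain ⟨hQ1', hQm', hP0', hPQ'⟩ := qConv_pos_mono hx h0 h1 n
  have hQ : (1:ℝ) ≤ (qConv x n : ℝ) := by exact_mod_cast hQ1'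
  have hQQ1 : ((qConv x n : ℝ)) ≤ (qConv x (n+1) : ℝ) := by exact_mod_cast hQm'
  have hP0 : (0:ℝ) ≤ ((convAux x n).2.2 : ℝ) := by exact_mod_cast hP0'
  have hPQ : ((convAux x n).2.2 : ℝ) ≤ (qConv x n : ℝ) := by exact_mod_cast hPQ'
  have hβR := betaP_mul_fullDen hx h0 h1 n
  have hβR1 := betaP_mul_fullDen hx h0 h1 (n+1)
  have hRdef : fullDen x n = (qConv x n : ℝ) + ((convAux x n).2.2 : ℝ) * gaussMap^[n] x := rfl
  have hRpos : 0 < fullDen x n := by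
    have := mul_nonneg hP0 hX0.le
    rw [hRdef]; linarith
  have hβ : betaP x n = 1 / fullDen x n := by
    rw [eq_div_iff (ne_of_gt hRpos)]; exact hβR
  have hR1def : fullDen x (n+1)
      = (qConv x (n+1) : ℝ) + (qConv x n : ℝ) * gaussMap^[n+1] x := by
    rw [fullDen, convAux_snd]
  have hQ1R1 : (qConv x (n+1) : ℝ) ≤ fullDen x (n+1) := by
    have := mul_nonneg (le_trans (by norm_num) hQ) hX10.le
    rw [hR1def]; linarith
  have hR1le : fullDen x (n+1) ≤ 2 * (qConv x (n+1) : ℝ) := by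
    have h2 : (qConv x n : ℝ) * gaussMap^[n+1] x ≤ (qConv x (n+1) : ℝ) := by
      calc (qConv x n : ℝ) * gaussMap^[n+1] x ≤ (qConv x n : ℝ) * 1 :=
            mul_le_mul_of_nonneg_left hX11.le (by linarith)
        _ = (qConv x n : ℝ) := mul_one _
        _ ≤ _ := hQQ1
    rw [hR1def]; linarith
  have hbeta : betaP x (n+1) = betaP x n * gaussMap^[n] x := by
    rw [betaP, betaP, Finset.prod_range_succ]
  have hβpos : 0 < betaP x n := by rw [hβ]; positivity
  have hXR : gaussMap^[n] x * fullDen x (n+1) = fullDen x n := by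
    have h2 : betaP x n * (gaussMap^[n] x * fullDen x (n+1)) = 1 := by
      rw [← mul_assoc, ← hbeta]; exact hβR1
    exact mul_left_cancel₀ (ne_of_gt hβpos) (h2.trans hβR.symm)
  have ha1 : (1:ℝ) ≤ (cfDigit x n : ℝ) := by exact_mod_cast one_le_cfDigit hx h0 h1 n
  have haX : (cfDigit x n : ℝ) ≤ 1 / gaussMap^[n] x := cfDigit_le n
  have hQ1eq : (qConv x (n+1) : ℝ)
      = (cfDigit x n : ℝ) * (qConv x n : ℝ) + ((convAux x n).2.2 : ℝ) := by
    rw [qConv_succ]; push_cast; ring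
  have := abstract_bound hk hX0 hX1 hQ hQQ1 hP0 hPQ hRdef hQ1R1 hR1le ha1 haX hQ1eq hXR
  rwa [← hβ] at this

lemma inv_sqrt_qConv_le {x : ℝ} (hx : Irrational x) (h0 : 0 < x) (h1 : x < 1) (n : ℕ) :
    1 / Real.sqrt (qConv x n : ℝ) ≤ 2 * ((Real.sqrt (Real.sqrt 2))⁻¹) ^ n := by
  have hs2 : (1:ℝ) < Real.sqrt 2 := by
    rw [show (1:ℝ) = Real.sqrt 1 from (Real.sqrt_one).symm]
    exact Real.sqrt_lt_sqrt (by norm_num) (by norm_num)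
  set c : ℝ := Real.sqrt (Real.sqrt 2) with hc
  have hc1 : 1 < c := by
    rw [hc, show (1:ℝ) = Real.sqrt 1 from (Real.sqrt_one).symm]
    exact Real.sqrt_lt_sqrt (by norm_num) hs2
  have hs2le : Real.sqrt 2 ≤ 2 := by
    nlinarith [Real.sq_sqrt (show (0:ℝ) ≤ 2 by norm_num), Real.sqrt_nonneg 2]
  have hc2 : c ≤ 2 := by
    calc c ≤ Real.sqrt 2 := by
          rw [hc]
          nlinarith [Real.sq_sqrt (Real.sqrt_nonneg 2), Real.sqrt_nonneg (Real.sqrt 2)]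
      _ ≤ 2 := hs2le
  have hcsq : c ^ 2 = Real.sqrt 2 := Real.sq_sqrt (Real.sqrt_nonneg 2)
  have hQint := qConv_growth hx h0 h1 n
  have hQR : ((2:ℝ))^(n/2) ≤ (qConv x n : ℝ) := by exact_mod_cast hQint
  have hQpos : (0:ℝ) < (qConv x n : ℝ) :=
    lt_of_lt_of_le (by positivity) hQR
  have hsqQpos : 0 < Real.sqrt (qConv x n : ℝ) := Real.sqrt_pos.mpr hQpos
  have hsq : (Real.sqrt 2)^(n/2) ≤ Real.sqrt (qConv x n : ℝ) := by
    rw [Real.le_sqrt (by positivity) hQpos.le]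
    calc ((Real.sqrt 2)^(n/2))^2 = ((Real.sqrt 2)^2)^(n/2) := by
          rw [← pow_mul, ← pow_mul, Nat.mul_comm]
      _ = (2:ℝ)^(n/2) := by rw [Real.sq_sqrt (by norm_num : (0:ℝ) ≤ 2)]
      _ ≤ (qConv x n : ℝ) := hQR
  have hcn : c ^ n ≤ 2 * Real.sqrt (qConv x n : ℝ) := by
    calc c^n ≤ c^(2*(n/2)+1) := pow_le_pow_right₀ hc1.le (by omega)
      _ = ((c^2)^(n/2)) * c := by rw [← pow_mul]; ring
      _ = (Real.sqrt 2)^(n/2) * c := by rw [hcsq]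
      _ ≤ Real.sqrt (qConv x n : ℝ) * 2 := by
          apply mul_le_mul hsq hc2 (by linarith) hsqQpos.le
      _ = 2 * Real.sqrt (qConv x n : ℝ) := by ring
  have hcpos : 0 < c := by linarith
  rw [inv_pow, ← one_div, mul_one_div, div_le_div_iff₀ hsqQpos (by positivity)]
  linarith [hcn]

end Aux

set_option maxHeartbeats 800000 in
theorem kBrjuno_comparison (k : ℕ) (hk : 1 ≤ k) :
    ∃ C : ℝ, 0 < C ∧ ∀ x : ℝ, Irrational x → 0 < x → x < 1 →
      (Summable (fun n => (betaP x n) ^ k * Real.log (1 / gaussMap^[n] x)) ↔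
        Summable (fun n => Real.log (qConv x (n + 1) : ℝ) / (qConv x n : ℝ) ^ k)) ∧
      (Summable (fun n => (betaP x n) ^ k * Real.log (1 / gaussMap^[n] x)) →
        |(∑' n, (betaP x n) ^ k * Real.log (1 / gaussMap^[n] x))
          - ∑' n, Real.log (qConv x (n + 1) : ℝ) / (qConv x n : ℝ) ^ k| ≤ C) := by
  classical
  set r : ℝ := (Real.sqrt (Real.sqrt 2))⁻¹ with hrdef
  have hc1 : 1 < Real.sqrt (Real.sqrt 2) := by
    rw [show (1:ℝ) = Real.sqrt 1 from (Real.sqrt_one).symm]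
    apply Real.sqrt_lt_sqrt (by norm_num)
    rw [show (1:ℝ) = Real.sqrt 1 from (Real.sqrt_one).symm]
    exact Real.sqrt_lt_sqrt (by norm_num) (by norm_num)
  have hr0 : 0 ≤ r := by rw [hrdef]; positivity
  have hr1 : r < 1 := by
    rw [hrdef, inv_lt_one_iff₀]
    right; exact hc1
  set E : ℕ → ℝ := fun n => (3 * k + 4 : ℝ) * (2 * r ^ n) with hEdef
  have hE : Summable E := by
    apply Summable.mul_left
    exact (summable_geometric_of_lt_one hr0 hr1).mul_left 2
  have hEnonneg : ∀ n, 0 ≤ E n := by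
    intro n
    have : (0:ℝ) ≤ r ^ n := pow_nonneg hr0 n
    have hk4 : (0:ℝ) ≤ 3 * k + 4 := by positivity
    rw [hEdef]; positivity
  refine ⟨∑' n, E n, ?_, ?_⟩
  · apply Summable.tsum_pos hE hEnonneg 0
    rw [hEdef]
    simp only [pow_zero, mul_one]
    positivity
  · intro x hxi hx0 hx1
    set f : ℕ → ℝ := fun n => (betaP x n) ^ k * Real.log (1 / gaussMap^[n] x) with hf
    set g : ℕ → ℝ := fun n => Real.log (qConv x (n + 1) : ℝ) / (qConv x n : ℝ) ^ k with hg
    have hbound : ∀ n, |f n - g n| ≤ E n := by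
      intro n
      refine (key_bound hxi hx0 hx1 hk n).trans ?_
      rw [hEdef, div_eq_mul_one_div]
      exact mul_le_mul_of_nonneg_left (inv_sqrt_qConv_le hxi hx0 hx1 n) (by positivity)
    have habs : Summable (fun n => |f n - g n|) :=
      Summable.of_nonneg_of_le (fun n => abs_nonneg _) hbound hE
    have hd : Summable (fun n => f n - g n) := habs.of_abs
    have hiff : Summable f ↔ Summable g := by
      constructor
      · intro hfs
        have := hfs.sub hd
        simpa using this
      · intro hgs
        have := hgs.add hd
        have heq : (fun n => g n + (f n - g n)) = f := by funext n; ring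
        rwa [heq] at this
    refine ⟨hiff, ?_⟩
    intro hfs
    have hgs : Summable g := hiff.mp hfs
    rw [← Summable.tsum_sub hfs hgs]
    have hnorm : Summable (fun n => ‖f n - g n‖) := by
      simpa only [Real.norm_eq_abs] using habs
    have h := norm_tsum_le_tsum_norm hnorm
    rw [Real.norm_eq_abs] at h
    calc |∑' n, (f n - g n)| ≤ ∑' n, ‖f n - g n‖ := h
      _ = ∑' n, |f n - g n| := by simp only [Real.norm_eq_abs]
      _ ≤ ∑' n, E n := Summable.tsum_le_tsum hbound habs hE
end

section
/- With M = [[3,-1],[1,0]] and N = [[-1,1],[-1,2]] (as 2×2 integer matrices acting by Möbius transformations), one has M·N·M⁻¹ = N, and consequently [[-2,1],[1,0]]·M^{i-1}·[[-1,1],[0,1]]·(M^{i-1}·[[2,-1],[1,0]])⁻¹ = [[1,0],[-1,1]] for every i ≥ 1 (as Möbius transformations, i.e. up to scalar). -/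
open Matrix

theorem moebius_matrix_identity :
    (!![3, -1; 1, 0] : Matrix (Fin 2) (Fin 2) ℤ) * !![-1, 1; -1, 2] * (!![3, -1; 1, 0])⁻¹
      = !![-1, 1; -1, 2] ∧
    ∀ i : ℕ, 1 ≤ i → ∃ c : ℤ, (c = 1 ∨ c = -1) ∧
      (!![-2, 1; 1, 0] : Matrix (Fin 2) (Fin 2) ℤ) * (!![3, -1; 1, 0]) ^ (i - 1)
          * !![-1, 1; 0, 1] * ((!![3, -1; 1, 0]) ^ (i - 1) * !![2, -1; 1, 0])⁻¹
        = c • !![1, 0; -1, 1] := by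
  set M : Matrix (Fin 2) (Fin 2) ℤ := !![3, -1; 1, 0] with hM
  set N : Matrix (Fin 2) (Fin 2) ℤ := !![-1, 1; -1, 2] with hN
  have hMdet : IsUnit M.det := by
    simp [hM, Matrix.det_fin_two_of]
  have hMinv : M⁻¹ = !![0, 1; -1, 3] := by
    rw [Matrix.inv_def]
    simp [hM, Matrix.det_fin_two_of, Matrix.adjugate_fin_two_of]
  have hcomm : Commute M N := by
    show M * N = N * M
    simp [hM, hN, Matrix.mul_fin_two]
  constructor
  · calc M * N * M⁻¹ = N * M * M⁻¹ := by rw [hcomm.eq]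
    _ = N * (M * M⁻¹) := by rw [Matrix.mul_assoc]
    _ = N := by rw [Matrix.mul_nonsing_inv _ hMdet, Matrix.mul_one]
  · intro i _
    refine ⟨1, Or.inl rfl, ?_⟩
    have hCinv : (!![2, -1; 1, 0] : Matrix (Fin 2) (Fin 2) ℤ)⁻¹ = !![0, 1; -1, 2] := by
      rw [Matrix.inv_def]
      simp [Matrix.det_fin_two_of, Matrix.adjugate_fin_two_of]
    have hCdet : IsUnit (!![2, -1; 1, 0] : Matrix (Fin 2) (Fin 2) ℤ).det := by
      simp [Matrix.det_fin_two_of]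
    have hpowdet : IsUnit (M ^ (i - 1)).det := by
      rw [Matrix.det_pow]; exact hMdet.pow _
    rw [Matrix.mul_inv_rev, hCinv]
    have hBC : (!![-1, 1; 0, 1] : Matrix (Fin 2) (Fin 2) ℤ) * !![0, 1; -1, 2] = N := by
      simp [hN, Matrix.mul_fin_two]
    have hpowcomm : M ^ (i - 1) * N = N * M ^ (i - 1) := (hcomm.pow_left _).eq
    calc !![-2, 1; 1, 0] * M ^ (i - 1) * !![-1, 1; 0, 1] * (!![0, 1; -1, 2] * (M ^ (i - 1))⁻¹)
        = !![-2, 1; 1, 0] * (M ^ (i - 1) * N * (M ^ (i - 1))⁻¹) := by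
          rw [← hBC]; simp only [Matrix.mul_assoc]
      _ = !![-2, 1; 1, 0] * (N * (M ^ (i - 1) * (M ^ (i - 1))⁻¹)) := by
          rw [hpowcomm, Matrix.mul_assoc]
      _ = !![-2, 1; 1, 0] * N := by rw [Matrix.mul_nonsing_inv _ hpowdet, Matrix.mul_one]
      _ = (1 : ℤ) • !![1, 0; -1, 1] := by simp [hN, Matrix.mul_fin_two]
end

section
/- There is a constant C > 0 such that for every irrational x ∈ (0,1) and r ≥ 1, |B_{1,finite}(p_r/q_r) - Σ_{j=0}^{r-1} β_{j-1}(x) log(1/G^j(x))| ≤ C·G^r(x)/q_r(x), where B_{1,finite}(p/q) is the finite Brjuno sum of the rational p_r/q_r (the sum over its finite continued fraction expansion) and p_r/q_r is the r-th convergent of x. One may take C = 2·Σ_{j≥0} g^j with g = (√5-1)/2. -/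
open Finset Filter

/-- truncated Brjuno sum of length `r`. -/
noncomputable def brjunoFinite (y : ℝ) (r : ℕ) : ℝ :=
  ∑ j ∈ Finset.range r, betaP y j * Real.log (1 / gaussMap^[j] y)

namespace BrjAux

noncomputable def pP (x : ℝ) (n : ℕ) : ℤ := (convAux x n).2.1
noncomputable def qP (x : ℝ) (n : ℕ) : ℤ := (convAux x n).2.2

lemma pConv_zero (x : ℝ) : pConv x 0 = 0 := rfl
lemma qConv_zero (x : ℝ) : qConv x 0 = 1 := rfl
lemma pP_zero (x : ℝ) : pP x 0 = 1 := rfl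
lemma qP_zero (x : ℝ) : qP x 0 = 0 := rfl
lemma pConv_succ (x : ℝ) (n : ℕ) : pConv x (n+1) = cfDigit x n * pConv x n + pP x n := rfl
lemma qConv_succ (x : ℝ) (n : ℕ) : qConv x (n+1) = cfDigit x n * qConv x n + qP x n := rfl
lemma pP_succ (x : ℝ) (n : ℕ) : pP x (n+1) = pConv x n := rfl
lemma qP_succ (x : ℝ) (n : ℕ) : qP x (n+1) = qConv x n := rfl

lemma det (x : ℝ) : ∀ n, pConv x n * qP x n - pP x n * qConv x n = (-1)^(n+1)
  | 0 => by simp [pConv_zero, qConv_zero, pP_zero, qP_zero]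
  | (n+1) => by
      have h := det x n
      rw [pConv_succ, qConv_succ, pP_succ, qP_succ, pow_succ]
      ring_nf
      ring_nf at h
      linarith

/-- the algebraic "epsilon": `EE x y j = (-1)^(j+1) (q_{j-1} y - p_{j-1})`. -/
noncomputable def EE (x y : ℝ) (j : ℕ) : ℝ := (-1)^(j+1) * ((qP x j : ℝ) * y - (pP x j : ℝ))

lemma EE_zero (x y : ℝ) : EE x y 0 = 1 := by simp [EE, pP_zero, qP_zero]

lemma EE_succ (x y : ℝ) (j : ℕ) :
    EE x y (j+1) = (-1)^j * ((qConv x j : ℝ) * y - (pConv x j : ℝ)) := by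
  rw [EE, pP_succ, qP_succ]; ring

lemma detR (x : ℝ) (n : ℕ) :
    (pConv x n : ℝ) * (qP x n : ℝ) - (pP x n : ℝ) * (qConv x n : ℝ) = (-1)^(n+1) := by
  exact_mod_cast det x n

lemma neg_one_sq' (j : ℕ) : ((-1:ℝ)^j) * ((-1:ℝ)^j) = 1 := by
  rw [← mul_pow]; norm_num

lemma EE_identity (x y : ℝ) (j : ℕ) :
    EE x y j * (qConv x j : ℝ) + EE x y (j+1) * (qP x j : ℝ) = 1 := by
  have hdet := detR x j
  have he := neg_one_sq' j
  rw [EE, EE_succ, pow_succ] at *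
  linear_combination (-((-1:ℝ)^j)) * hdet + he

lemma EE_rec (x y : ℝ) (j : ℕ) :
    EE x y (j+2) = EE x y j - (cfDigit x j : ℝ) * EE x y (j+1) := by
  rw [EE_succ, EE_succ, EE, pConv_succ, qConv_succ, pow_succ]
  push_cast
  ring

lemma EE_sub (x y y' : ℝ) (j : ℕ) :
    EE x y j - EE x y' j = (-1)^(j+1) * (qP x j : ℝ) * (y - y') := by
  rw [EE, EE]; ring

lemma EE_cross (x y y' : ℝ) (j : ℕ) :
    EE x y' (j+1) * EE x y j - EE x y (j+1) * EE x y' j = (-1)^j * (y' - y) := by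
  have hdet := detR x j
  have he := neg_one_sq' j
  rw [show EE x y' (j+1) = (-1:ℝ)^j * ((qConv x j : ℝ) * y' - (pConv x j : ℝ)) from EE_succ x y' j,
     show EE x y (j+1) = (-1:ℝ)^j * ((qConv x j : ℝ) * y - (pConv x j : ℝ)) from EE_succ x y j,
     EE, EE]
  linear_combination (-((-1:ℝ)^j*(-1:ℝ)^j)*(y' - y)) * hdet + (((-1:ℝ)^j)*(y' - y)) * he

section Irr

variable {x : ℝ}

lemma gauss_iter_succ (n : ℕ) : gaussMap^[n+1] x = gaussMap (gaussMap^[n] x) :=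
  Function.iterate_succ_apply' _ _ _

lemma iter_irr (hx : Irrational x) (h0 : 0 < x) (h1 : x < 1) :
    ∀ n, Irrational (gaussMap^[n] x) ∧ 0 < gaussMap^[n] x ∧ gaussMap^[n] x < 1 := by
  intro n
  induction n with
  | zero => exact ⟨hx, h0, h1⟩
  | succ n ih =>
    obtain ⟨hirr, hp, hl⟩ := ih
    rw [gauss_iter_succ]
    set z := gaussMap^[n] x with hz
    have hinv : Irrational (1/z) := by rw [one_div]; exact hirr.inv
    have hfr : Irrational (gaussMap z) := by
      unfold gaussMap Int.fract
      exact Irrational.sub_intCast hinv _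
    have hne : gaussMap z ≠ 0 := by
      intro h; exact hfr ⟨0, by simp [h]⟩
    refine ⟨hfr, ?_, ?_⟩
    · exact lt_of_le_of_ne (Int.fract_nonneg (1/z)) (Ne.symm hne)
    · exact Int.fract_lt_one _

lemma iter_pos (hx : Irrational x) (h0 : 0 < x) (h1 : x < 1) (n : ℕ) :
    0 < gaussMap^[n] x := (iter_irr hx h0 h1 n).2.1

lemma iter_lt_one (hx : Irrational x) (h0 : 0 < x) (h1 : x < 1) (n : ℕ) :
    gaussMap^[n] x < 1 := (iter_irr hx h0 h1 n).2.2

lemma digit_ge_one (hx : Irrational x) (h0 : 0 < x) (h1 : x < 1) (n : ℕ) :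
    1 ≤ cfDigit x n := by
  have hp := iter_pos hx h0 h1 n
  have hl := iter_lt_one hx h0 h1 n
  have : (1:ℝ) < 1 / gaussMap^[n] x := by
    rw [lt_div_iff₀ hp]; linarith
  exact Int.le_floor.mpr (by exact_mod_cast this.le)

lemma iter_succ_eq (hx : Irrational x) (h0 : 0 < x) (h1 : x < 1) (n : ℕ) :
    gaussMap^[n+1] x = 1 / gaussMap^[n] x - (cfDigit x n : ℝ) := by
  rw [gauss_iter_succ]
  unfold gaussMap Int.fract cfDigit
  rfl

end Irr

section Qfacts

variable {x : ℝ} (hx : Irrational x) (h0 : 0 < x) (h1 : x < 1)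
include hx h0 h1

lemma q_facts : ∀ n, 1 ≤ qConv x n ∧ 0 ≤ qP x n ∧ qP x n ≤ qConv x n := by
  intro n
  induction n with
  | zero => simp [qConv_zero, qP_zero]
  | succ n ih =>
    obtain ⟨hq, hq0, hqle⟩ := ih
    have ha := digit_ge_one hx h0 h1 n
    rw [qConv_succ, qP_succ]
    refine ⟨?_, by linarith, ?_⟩ <;> nlinarith

lemma q_pos (n : ℕ) : 1 ≤ qConv x n := (q_facts hx h0 h1 n).1

lemma qP_nonneg (n : ℕ) : 0 ≤ qP x n := (q_facts hx h0 h1 n).2.1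

lemma qP_le (n : ℕ) : qP x n ≤ qConv x n := (q_facts hx h0 h1 n).2.2

lemma q_step (n : ℕ) : qConv x n + qP x n ≤ qConv x (n+1) := by
  have ha := digit_ge_one hx h0 h1 n
  have hq := q_pos hx h0 h1 n
  rw [qConv_succ]
  nlinarith

lemma q_mono (n : ℕ) : qConv x n ≤ qConv x (n+1) := by
  have := q_step hx h0 h1 n
  have := qP_nonneg hx h0 h1 n
  linarith

lemma qP_lt_q_succ (n : ℕ) : 2 * qP x n ≤ qConv x (n+1) := by
  have h1' := q_step hx h0 h1 n
  have h2 := qP_le hx h0 h1 n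
  linarith

lemma q_sum : ∀ n, ∑ k ∈ Finset.range (n+1), qConv x k ≤ qConv x n + qConv x (n+1) := by
  intro n
  induction n with
  | zero =>
    simp only [zero_add, Finset.sum_range_one, qConv_zero]
    have := q_pos hx h0 h1 1
    linarith
  | succ n ih =>
    rw [Finset.sum_range_succ]
    have hstep : qConv x n + qConv x (n+1) ≤ qConv x (n+2) := by
      have := q_step hx h0 h1 (n+1)
      rw [qP_succ] at this
      linarith
    linarith

end Qfacts

section Betafacts

variable {x : ℝ} (hx : Irrational x) (h0 : 0 < x) (h1 : x < 1)

lemma betaP_succ (y : ℝ) (n : ℕ) : betaP y (n+1) = betaP y n * gaussMap^[n] y := by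
  unfold betaP; rw [Finset.prod_range_succ]

include hx h0 h1

lemma betaP_pos (n : ℕ) : 0 < betaP x n := by
  unfold betaP
  exact Finset.prod_pos (fun i _ => iter_pos hx h0 h1 i)

lemma betaP_eq_EE : ∀ n, betaP x n = EE x x n ∧ betaP x (n+1) = EE x x (n+1) := by
  intro n
  induction n with
  | zero =>
    constructor
    · rw [EE_zero]; unfold betaP; simp
    · rw [EE_succ]
      unfold betaP
      simp [pConv_zero, qConv_zero]
  | succ n ih =>
    obtain ⟨ih1, ih2⟩ := ih
    refine ⟨ih2, ?_⟩
    have hrec := EE_rec x x n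
    have hx0 : gaussMap^[n] x ≠ 0 := ne_of_gt (iter_pos hx h0 h1 n)
    have hiter := iter_succ_eq hx h0 h1 n
    rw [betaP_succ, betaP_succ, hiter, hrec, ← ih1, ← ih2, betaP_succ]
    field_simp

lemma betaP_identity (n : ℕ) :
    betaP x n * (qConv x n : ℝ) + betaP x (n+1) * (qP x n : ℝ) = 1 := by
  rw [(betaP_eq_EE hx h0 h1 n).1, (betaP_eq_EE hx h0 h1 n).2]
  exact EE_identity x x n

lemma betaP_le (n : ℕ) : betaP x n * (qConv x n : ℝ) ≤ 1 := by
  have h := betaP_identity hx h0 h1 n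
  have h2 := betaP_pos hx h0 h1 (n+1)
  have h3 : (0:ℝ) ≤ (qP x n : ℝ) := by exact_mod_cast qP_nonneg hx h0 h1 n
  nlinarith

lemma betaP_ge (n : ℕ) : 1 ≤ 2 * (betaP x n * (qConv x n : ℝ)) := by
  have h := betaP_identity hx h0 h1 n
  have hb := betaP_pos hx h0 h1 n
  have hx1 := iter_lt_one hx h0 h1 n
  have hx0 := iter_pos hx h0 h1 n
  have hsucc : betaP x (n+1) ≤ betaP x n := by
    rw [betaP_succ]; nlinarith
  have h3 : (qP x n : ℝ) ≤ (qConv x n : ℝ) := by exact_mod_cast qP_le hx h0 h1 n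
  have h4 : (0:ℝ) ≤ (qP x n : ℝ) := by exact_mod_cast qP_nonneg hx h0 h1 n
  have h5 : (1:ℝ) ≤ (qConv x n : ℝ) := by exact_mod_cast q_pos hx h0 h1 n
  nlinarith

end Betafacts

section Yfacts

variable {x : ℝ} (hx : Irrational x) (h0 : 0 < x) (h1 : x < 1) {r : ℕ} (hr : 1 ≤ r)

/-- the rational convergent -/
noncomputable def yr (x : ℝ) (r : ℕ) : ℝ := (pConv x r : ℝ) / (qConv x r : ℝ)

include hx h0 h1

lemma qr_pos (n : ℕ) : (0:ℝ) < (qConv x n : ℝ) := by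
  have := q_pos hx h0 h1 n
  exact_mod_cast lt_of_lt_of_le zero_lt_one (by exact_mod_cast this)

lemma EE_yr_top (r : ℕ) : EE x (yr x r) (r+1) = 0 := by
  rw [EE_succ, yr]
  have hq : (qConv x r : ℝ) ≠ 0 := ne_of_gt (qr_pos hx h0 h1 r)
  field_simp
  ring

lemma EE_yr_bounds : ∀ d j, j + d = r →
    0 < EE x (yr x r) j ∧ EE x (yr x r) j * (qConv x j : ℝ) ≤ 1 ∧
      1 ≤ 2 * (EE x (yr x r) j * (qConv x j : ℝ)) := by
  intro d
  induction d with
  | zero =>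
    intro j hj
    have hj' : j = r := by omega
    have hid := EE_identity x (yr x r) j
    have htop : EE x (yr x r) (j+1) = 0 := by rw [hj']; exact EE_yr_top hx h0 h1 r
    rw [htop] at hid
    have hq := qr_pos hx h0 h1 j
    simp only [zero_mul, add_zero] at hid
    refine ⟨?_, by rw [hid], by rw [hid]; norm_num⟩
    nlinarith
  | succ d ih =>
    intro j hj
    obtain ⟨hpos, hle, _⟩ := ih (j+1) (by omega)
    have hid := EE_identity x (yr x r) j
    have hq := qr_pos hx h0 h1 j
    have hq1 := qr_pos hx h0 h1 (j+1)
    have hqP : (0:ℝ) ≤ (qP x j : ℝ) := by exact_mod_cast qP_nonneg hx h0 h1 j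
    have hqPl : 2 * (qP x j : ℝ) ≤ (qConv x (j+1) : ℝ) := by
      exact_mod_cast qP_lt_q_succ hx h0 h1 j
    have key : EE x (yr x r) (j+1) * (qP x j : ℝ) ≤ 1/2 := by
      have h2 : EE x (yr x r) (j+1) * (2 * (qP x j : ℝ)) ≤ EE x (yr x r) (j+1) * (qConv x (j+1) : ℝ) :=
        mul_le_mul_of_nonneg_left hqPl hpos.le
      nlinarith
    have hEq : EE x (yr x r) j * (qConv x j : ℝ) = 1 - EE x (yr x r) (j+1) * (qP x j : ℝ) := by
      linarith
    have hnn : (0:ℝ) ≤ EE x (yr x r) (j+1) * (qP x j : ℝ) := mul_nonneg hpos.le hqP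
    refine ⟨?_, by nlinarith, by nlinarith⟩
    nlinarith

lemma EE_yr_pos (j : ℕ) (hjr : j ≤ r) : 0 < EE x (yr x r) j :=
  (EE_yr_bounds hx h0 h1 (r - j) j (by omega)).1

lemma EE_yr_le (j : ℕ) (hjr : j ≤ r) : EE x (yr x r) j * (qConv x j : ℝ) ≤ 1 :=
  (EE_yr_bounds hx h0 h1 (r - j) j (by omega)).2.1

lemma EE_yr_ge (j : ℕ) (hjr : j ≤ r) : 1 ≤ 2 * (EE x (yr x r) j * (qConv x j : ℝ)) :=
  (EE_yr_bounds hx h0 h1 (r - j) j (by omega)).2.2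

lemma EE_yr_nonneg (j : ℕ) (hjr : j ≤ r + 1) : 0 ≤ EE x (yr x r) j := by
  rcases Nat.lt_or_ge j (r+1) with h | h
  · exact (EE_yr_pos hx h0 h1 j (by omega)).le
  · have : j = r + 1 := by omega
    rw [this, EE_yr_top hx h0 h1 r]

lemma EE_yr_dec (j : ℕ) (hjr : j + 1 ≤ r) :
    (cfDigit x j : ℝ) * EE x (yr x r) (j+1) ≤ EE x (yr x r) j := by
  have hrec := EE_rec x (yr x r) j
  have hnn : 0 ≤ EE x (yr x r) (j+2) := EE_yr_nonneg hx h0 h1 (j+2) (by omega)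
  linarith

lemma EE_yr_succ_le (j : ℕ) (hjr : j + 1 ≤ r) :
    EE x (yr x r) (j+1) ≤ EE x (yr x r) j := by
  have h := EE_yr_dec hx h0 h1 j hjr
  have ha : (1:ℝ) ≤ (cfDigit x j : ℝ) := by exact_mod_cast digit_ge_one hx h0 h1 j
  have hp := EE_yr_pos (r := r) hx h0 h1 (j+1) (by omega)
  nlinarith

end Yfacts

section Giter

variable {x : ℝ} (hx : Irrational x) (h0 : 0 < x) (h1 : x < 1) {r : ℕ}
include hx h0 h1

lemma EE_yr_one : EE x (yr x r) 1 = yr x r := by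
  rw [EE_succ]
  simp [pConv_zero, qConv_zero]

/-- identification of the Gauss iterates of the convergent. -/
lemma giter : ∀ j, j + 1 ≤ r →
    (gaussMap^[j] (yr x r) = EE x (yr x r) (j+1) / EE x (yr x r) j ∨
     (gaussMap^[j] (yr x r) = 0 ∧ EE x (yr x r) (j+1) = EE x (yr x r) j)) := by
  intro j
  induction j with
  | zero =>
    intro hjr
    left
    rw [Function.iterate_zero_apply, EE_yr_one hx h0 h1, EE_zero, div_one]
  | succ j ih =>
    intro hjr
    have hj2 : j + 2 ≤ r := hjr
    have hIH := ih (by omega)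
    have hEj : 0 < EE x (yr x r) j := EE_yr_pos hx h0 h1 j (by omega)
    have hEj1 : 0 < EE x (yr x r) (j+1) := EE_yr_pos hx h0 h1 (j+1) (by omega)
    have hEj2 : 0 < EE x (yr x r) (j+2) := EE_yr_pos hx h0 h1 (j+2) (by omega)
    have ha : (1:ℝ) ≤ (cfDigit x j : ℝ) := by exact_mod_cast digit_ge_one hx h0 h1 j
    have hrec := EE_rec x (yr x r) j
    -- rule out the right branch of the IH
    have hleft : gaussMap^[j] (yr x r) = EE x (yr x r) (j+1) / EE x (yr x r) j := by
      rcases hIH with h | ⟨_, heq⟩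
      · exact h
      · exfalso
        nlinarith
    -- compute the next iterate
    have hiter : gaussMap^[j+1] (yr x r) =
        Int.fract ((cfDigit x j : ℝ) + EE x (yr x r) (j+2) / EE x (yr x r) (j+1)) := by
      rw [gauss_iter_succ, hleft]
      unfold gaussMap
      congr 1
      rw [one_div, inv_div]
      field_simp
      linarith [hrec]
    have hnn : 0 ≤ EE x (yr x r) (j+2) / EE x (yr x r) (j+1) := by positivity
    rcases lt_or_ge (EE x (yr x r) (j+2) / EE x (yr x r) (j+1)) 1 with hlt | hge
    · left
      rw [hiter, Int.fract_intCast_add, Int.fract_eq_self.mpr ⟨hnn, hlt⟩]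
    · right
      -- then E_{j+2} = E_{j+1}
      have h1' : EE x (yr x r) (j+1) ≤ EE x (yr x r) (j+2) := by
        rw [le_div_iff₀ hEj1] at hge
        linarith
    -- also E_{j+2} ≤ E_{j+1} from the next recursion step
      have h2' : EE x (yr x r) (j+2) ≤ EE x (yr x r) (j+1) := by
        have hd := EE_yr_dec (r := r) hx h0 h1 (j+1) (by omega)
        have ha1 : (1:ℝ) ≤ (cfDigit x (j+1) : ℝ) := by
          exact_mod_cast digit_ge_one hx h0 h1 (j+1)
        nlinarith
      have heq : EE x (yr x r) (j+2) = EE x (yr x r) (j+1) := le_antisymm h2' h1'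
      refine ⟨?_, heq⟩
      rw [hiter, heq, div_self (ne_of_gt hEj1)]
      have : ((cfDigit x j : ℝ) + 1) = ((cfDigit x j + 1 : ℤ) : ℝ) := by push_cast; ring
      rw [this, Int.fract_intCast]

lemma betaP_yr (j : ℕ) (hjr : j + 1 ≤ r) : betaP (yr x r) j = EE x (yr x r) j := by
  induction j with
  | zero => rw [EE_zero]; unfold betaP; simp
  | succ j ih =>
    have hj1 : j + 1 ≤ r := by omega
    have hleft : gaussMap^[j] (yr x r) = EE x (yr x r) (j+1) / EE x (yr x r) j := by
      rcases giter hx h0 h1 j hj1 with h | ⟨_, heq⟩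
      · exact h
      · exfalso
        have hEj1 : 0 < EE x (yr x r) (j+1) := EE_yr_pos hx h0 h1 (j+1) hj1
        have hEj2 : 0 < EE x (yr x r) (j+2) := EE_yr_pos hx h0 h1 (j+2) hjr
        have hrec := EE_rec x (yr x r) j
        have ha : (1:ℝ) ≤ (cfDigit x j : ℝ) := by exact_mod_cast digit_ge_one hx h0 h1 j
        nlinarith
    have hEj : EE x (yr x r) j ≠ 0 := ne_of_gt (EE_yr_pos hx h0 h1 j (by omega))
    rw [betaP_succ, ih hj1, hleft]
    field_simp

lemma log_yr (j : ℕ) (hjr : j + 1 ≤ r) :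
    Real.log (1 / gaussMap^[j] (yr x r)) =
      Real.log (EE x (yr x r) j / EE x (yr x r) (j+1)) := by
  rcases giter hx h0 h1 j hjr with h | ⟨h0', heq⟩
  · rw [h, one_div, inv_div]
  · rw [h0', heq, div_self (ne_of_gt (EE_yr_pos hx h0 h1 j (by omega)))]
    simp

end Giter

section Estimates

/-- generic estimate on the difference of two log-ratios. -/
lemma log_ratio_est {E E' B B' Qj Q1 D : ℝ} (hE : 0 < E) (hE' : 0 < E') (hB : 0 < B)
    (hB' : 0 < B') (hQj : 0 < Qj) (hQ1 : 0 < Q1)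
    (hcross : |B' * E - E' * B| ≤ D)
    (hE'Q : 1 ≤ 2 * (E' * Q1)) (hEQ : 1 ≤ 2 * (E * Qj))
    (hBQ : B * Qj ≤ 1) (hB'Q : 1 ≤ 2 * (B' * Q1)) :
    B * |Real.log (E / E') - Real.log (B / B')| ≤ 4 * Q1 * D := by
  have hD : 0 ≤ D := le_trans (abs_nonneg _) hcross
  set u : ℝ := E' / E with hu_def
  set v : ℝ := B' / B with hv_def
  have hu : 0 < u := by positivity
  have hv : 0 < v := by positivity
  have hlog : Real.log (E / E') - Real.log (B / B') = Real.log v - Real.log u := by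
    rw [Real.log_div (ne_of_gt hE) (ne_of_gt hE'), Real.log_div (ne_of_gt hB) (ne_of_gt hB'),
      hu_def, hv_def, Real.log_div (ne_of_gt hE') (ne_of_gt hE),
      Real.log_div (ne_of_gt hB') (ne_of_gt hB)]
    ring
  have hprod : (v - u) * (B * E) = B' * E - E' * B := by
    have hvB : v * B = B' := by rw [hv_def]; field_simp
    have huE : u * E = E' := by rw [hu_def]; field_simp
    linear_combination E * hvB - B * huE
  have hprod_le : |v - u| * (B * E) ≤ D := by
    have : |v - u| * (B * E) = |(v - u) * (B * E)| := by
      rw [abs_mul, abs_of_pos (by positivity : (0:ℝ) < B * E)]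
    rw [this, hprod]
    exact hcross
  rw [hlog]
  rcases le_total u v with hcase | hcase
  · -- u ≤ v
    have h1 : Real.log v - Real.log u ≤ (v - u) / u := by
      have h2 : Real.log (v / u) ≤ v / u - 1 := Real.log_le_sub_one_of_pos (by positivity)
      rw [Real.log_div (ne_of_gt hv) (ne_of_gt hu)] at h2
      have h3 : (v - u) / u = v / u - 1 := by field_simp
      linarith
    have habs : |Real.log v - Real.log u| = Real.log v - Real.log u :=
      abs_of_nonneg (by linarith [Real.log_le_log hu hcase])
    rw [habs]
    have hvu : |v - u| = v - u := abs_of_nonneg (by linarith)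
    rw [hvu] at hprod_le
    have hstep : B * ((v - u) / u) ≤ 4 * Q1 * D := by
      have hrw : B * ((v - u) / u) = (B * (v - u) * E) / E' := by
        rw [hu_def]; field_simp
      rw [hrw, div_le_iff₀ hE']
      have hh := mul_le_mul_of_nonneg_left hE'Q hD
      nlinarith [hprod_le, mul_nonneg hD (mul_pos hE' hQ1).le]
    calc B * (Real.log v - Real.log u) ≤ B * ((v - u) / u) := by
          apply mul_le_mul_of_nonneg_left _ hB.le
          exact h1
      _ ≤ 4 * Q1 * D := hstep
  · -- v ≤ u
    have h1 : Real.log u - Real.log v ≤ (u - v) / v := by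
      have h2 : Real.log (u / v) ≤ u / v - 1 := Real.log_le_sub_one_of_pos (by positivity)
      rw [Real.log_div (ne_of_gt hu) (ne_of_gt hv)] at h2
      have h3 : (u - v) / v = u / v - 1 := by field_simp
      linarith
    have habs : |Real.log v - Real.log u| = Real.log u - Real.log v := by
      rw [abs_sub_comm]
      exact abs_of_nonneg (by linarith [Real.log_le_log hv hcase])
    rw [habs]
    have hvu : |v - u| = u - v := by rw [abs_sub_comm]; exact abs_of_nonneg (by linarith)
    rw [hvu] at hprod_le
    have hstep : B * ((u - v) / v) ≤ 4 * Q1 * D := by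
      have hrw : B * ((u - v) / v) = (B * B * (u - v)) / B' := by
        rw [hv_def]; field_simp
      rw [hrw, div_le_iff₀ hB']
      have h2E : B ≤ 2 * E := by nlinarith
      have hBuv : 0 ≤ (u - v) * B := mul_nonneg (by linarith) hB.le
      have hkey : 0 ≤ (2 * E - B) * ((u - v) * B) :=
        mul_nonneg (by linarith) hBuv
      have hh := mul_le_mul_of_nonneg_left hB'Q (by linarith : (0:ℝ) ≤ 2 * D)
      nlinarith [hprod_le]
    calc B * (Real.log u - Real.log v) ≤ B * ((u - v) / v) := by
          apply mul_le_mul_of_nonneg_left _ hB.le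
          exact h1
      _ ≤ 4 * Q1 * D := hstep

end Estimates

section TermBound

variable {x : ℝ} (hx : Irrational x) (h0 : 0 < x) (h1 : x < 1) {r : ℕ}
include hx h0 h1

lemma EE_yr_succ_le' (j : ℕ) (hjr : j + 1 ≤ r) :
    EE x (yr x r) (j+2) ≤ EE x (yr x r) (j+1) := by
  rcases Nat.lt_or_ge (j+1) r with h | h
  · exact EE_yr_succ_le hx h0 h1 (j+1) (by omega)
  · have hjr' : j + 1 = r := by omega
    have : EE x (yr x r) (j+2) = 0 := by
      rw [show j + 2 = r + 1 by omega]
      exact EE_yr_top hx h0 h1 r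
    rw [this]
    exact (EE_yr_pos hx h0 h1 (j+1) (by omega)).le

lemma term_bound (j : ℕ) (hjr : j + 1 ≤ r) :
    |EE x (yr x r) j * Real.log (EE x (yr x r) j / EE x (yr x r) (j+1))
        - betaP x j * Real.log (betaP x j / betaP x (j+1))|
      ≤ 5 * (qConv x (j+1) : ℝ) * |yr x r - x| := by
  set y := yr x r with hy_def
  set E := EE x y j with hE_def
  set E' := EE x y (j+1) with hE'_def
  set B := betaP x j with hB_def
  set B' := betaP x (j+1) with hB'_def
  have hEpos : 0 < E := EE_yr_pos hx h0 h1 j (by omega)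
  have hE'pos : 0 < E' := EE_yr_pos hx h0 h1 (j+1) hjr
  have hBpos : 0 < B := betaP_pos hx h0 h1 j
  have hB'pos : 0 < B' := betaP_pos hx h0 h1 (j+1)
  have hQjpos : (0:ℝ) < (qConv x j : ℝ) := qr_pos hx h0 h1 j
  have hQ1pos : (0:ℝ) < (qConv x (j+1) : ℝ) := qr_pos hx h0 h1 (j+1)
  have hqPnn : (0:ℝ) ≤ (qP x j : ℝ) := by exact_mod_cast qP_nonneg hx h0 h1 j
  have hBE : B = EE x x j := (betaP_eq_EE hx h0 h1 j).1
  have hB'E : B' = EE x x (j+1) := (betaP_eq_EE hx h0 h1 j).2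
  -- difference of the epsilons
  have hsub : |E - B| = (qP x j : ℝ) * |y - x| := by
    rw [hE_def, hBE, EE_sub x y x j, abs_mul, abs_mul, abs_pow, abs_neg, abs_one,
      one_pow, one_mul, abs_of_nonneg hqPnn]
  -- cross-term
  have hcross : |B' * E - E' * B| ≤ |y - x| := by
    rw [hBE, hB'E, hE_def, hE'_def, EE_cross x y x j, abs_mul, abs_pow,
      abs_neg, abs_one, one_pow, one_mul, abs_sub_comm]
  -- bound on log (E/E')
  have hle : E' ≤ E := EE_yr_succ_le hx h0 h1 j hjr
  have hlogEnn : 0 ≤ Real.log (E / E') :=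
    Real.log_nonneg ((one_le_div hE'pos).mpr hle)
  have ha1 : (1:ℝ) ≤ (cfDigit x j : ℝ) := by exact_mod_cast digit_ge_one hx h0 h1 j
  have hrec := EE_rec x y j
  have hE''le : EE x y (j+2) ≤ E' := EE_yr_succ_le' hx h0 h1 j hjr
  have hlogE_le : Real.log (E / E') ≤ (cfDigit x j : ℝ) := by
    have hdiv : E / E' ≤ (cfDigit x j : ℝ) + 1 := by
      rw [div_le_iff₀ hE'pos]
      nlinarith
    have hpos : (0:ℝ) < E / E' := by positivity
    have := Real.log_le_sub_one_of_pos hpos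
    have h2 : Real.log (E / E') ≤ Real.log ((cfDigit x j : ℝ) + 1) :=
      Real.log_le_log hpos hdiv
    have h3 := Real.log_le_sub_one_of_pos (show (0:ℝ) < (cfDigit x j : ℝ) + 1 by linarith)
    linarith
  -- part 1
  have hqa : (qP x j : ℝ) * (cfDigit x j : ℝ) ≤ (qConv x (j+1) : ℝ) := by
    have h4 : qP x j * cfDigit x j ≤ qConv x (j+1) := by
      rw [qConv_succ]
      have := qP_le hx h0 h1 j
      have := digit_ge_one hx h0 h1 j
      have := qP_nonneg hx h0 h1 j
      have := q_pos hx h0 h1 j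
      nlinarith
    exact_mod_cast h4
  have hpart1 : |E - B| * Real.log (E / E') ≤ (qConv x (j+1) : ℝ) * |y - x| := by
    rw [hsub]
    calc (qP x j : ℝ) * |y - x| * Real.log (E / E')
        ≤ (qP x j : ℝ) * |y - x| * (cfDigit x j : ℝ) := by
          apply mul_le_mul_of_nonneg_left hlogE_le
          positivity
      _ = (qP x j : ℝ) * (cfDigit x j : ℝ) * |y - x| := by ring
      _ ≤ (qConv x (j+1) : ℝ) * |y - x| := by
          apply mul_le_mul_of_nonneg_right hqa (abs_nonneg _)
  -- part 2 via the generic estimate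
  have hpart2 : B * |Real.log (E / E') - Real.log (B / B')|
      ≤ 4 * (qConv x (j+1) : ℝ) * |y - x| := by
    apply log_ratio_est hEpos hE'pos hBpos hB'pos hQjpos hQ1pos hcross
    · exact EE_yr_ge hx h0 h1 (j+1) hjr
    · exact EE_yr_ge hx h0 h1 j (by omega)
    · exact betaP_le hx h0 h1 j
    · exact betaP_ge hx h0 h1 (j+1)
  -- combine
  have hdecomp : E * Real.log (E / E') - B * Real.log (B / B')
      = (E - B) * Real.log (E / E') + B * (Real.log (E / E') - Real.log (B / B')) := by
    ring
  rw [hdecomp]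
  calc |(E - B) * Real.log (E / E') + B * (Real.log (E / E') - Real.log (B / B'))|
      ≤ |(E - B) * Real.log (E / E')| + |B * (Real.log (E / E') - Real.log (B / B'))| :=
        abs_add_le _ _
    _ ≤ (qConv x (j+1) : ℝ) * |y - x| + 4 * (qConv x (j+1) : ℝ) * |y - x| := by
        apply add_le_add
        · rw [abs_mul, abs_of_nonneg hlogEnn]
          exact hpart1
        · rw [abs_mul, abs_of_pos hBpos]
          exact hpart2
    _ = 5 * (qConv x (j+1) : ℝ) * |y - x| := by ring

lemma yx_bound (r : ℕ) :
    |yr x r - x| * ((qConv x r : ℝ) * (qConv x r : ℝ)) ≤ gaussMap^[r] x := by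
  have hQ := qr_pos hx h0 h1 r
  have h1' : (yr x r - x) * (qConv x r : ℝ) = (pConv x r : ℝ) - (qConv x r : ℝ) * x := by
    rw [yr]
    field_simp
  have hkey : betaP x (r+1) = (-1:ℝ)^r * ((qConv x r : ℝ) * x - (pConv x r : ℝ)) := by
    rw [(betaP_eq_EE hx h0 h1 r).2, EE_succ]
  have habs2 : |(pConv x r : ℝ) - (qConv x r : ℝ) * x| = |betaP x (r+1)| := by
    rw [hkey, abs_mul, abs_pow, abs_neg, abs_one, one_pow, one_mul, abs_sub_comm]
  have habs : |yr x r - x| * (qConv x r : ℝ) = betaP x (r+1) := by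
    rw [← abs_of_pos hQ, ← abs_mul, h1', habs2, abs_of_pos (betaP_pos hx h0 h1 (r+1))]
  have hbb : betaP x (r+1) * (qConv x r : ℝ) ≤ gaussMap^[r] x := by
    rw [betaP_succ]
    have hble := betaP_le hx h0 h1 r
    have hgpos := iter_pos hx h0 h1 r
    nlinarith [betaP_pos hx h0 h1 r]
  calc |yr x r - x| * ((qConv x r : ℝ) * (qConv x r : ℝ))
      = (|yr x r - x| * (qConv x r : ℝ)) * (qConv x r : ℝ) := by ring
    _ = betaP x (r+1) * (qConv x r : ℝ) := by rw [habs]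
    _ ≤ gaussMap^[r] x := hbb

lemma q_sum3 (hr : 1 ≤ r) : ∑ j ∈ Finset.range r, qConv x (j+1) ≤ 3 * qConv x r := by
  obtain ⟨m, rfl⟩ : ∃ m, r = m + 1 := ⟨r - 1, by omega⟩
  have hs := q_sum hx h0 h1 m
  have hmono := q_mono hx h0 h1 m
  have hsum' : ∑ j ∈ Finset.range (m+1+1), qConv x j
      = (∑ j ∈ Finset.range (m+1), qConv x (j+1)) + qConv x 0 := Finset.sum_range_succ' _ _
  have hsum'' : ∑ j ∈ Finset.range (m+1+1), qConv x j
      = (∑ j ∈ Finset.range (m+1), qConv x j) + qConv x (m+1) := Finset.sum_range_succ _ _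
  rw [qConv_zero] at hsum'
  omega

end TermBound

end BrjAux

theorem truncated_brjuno_near_convergent :
    ∃ C : ℝ, 0 < C ∧ ∀ x : ℝ, Irrational x → 0 < x → x < 1 → ∀ r : ℕ, 1 ≤ r →
      |brjunoFinite ((pConv x r : ℝ) / (qConv x r : ℝ)) r
          - ∑ j ∈ Finset.range r, betaP x j * Real.log (1 / gaussMap^[j] x)|
        ≤ C * gaussMap^[r] x / (qConv x r : ℝ) := by
  refine ⟨15, by norm_num, ?_⟩
  intro x hx h0 h1 r hr
  open BrjAux in
  have hyr : (pConv x r : ℝ) / (qConv x r : ℝ) = BrjAux.yr x r := rfl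
  rw [hyr]
  have hQ : (0:ℝ) < (qConv x r : ℝ) := BrjAux.qr_pos hx h0 h1 r
  -- rewrite the first sum
  have hS1 : brjunoFinite (BrjAux.yr x r) r
      = ∑ j ∈ Finset.range r, BrjAux.EE x (BrjAux.yr x r) j *
          Real.log (BrjAux.EE x (BrjAux.yr x r) j / BrjAux.EE x (BrjAux.yr x r) (j+1)) := by
    unfold brjunoFinite
    apply Finset.sum_congr rfl
    intro j hj
    have hjr : j + 1 ≤ r := Finset.mem_range.mp hj
    rw [BrjAux.betaP_yr hx h0 h1 j hjr, BrjAux.log_yr hx h0 h1 j hjr]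
  -- rewrite the second sum
  have hS2 : (∑ j ∈ Finset.range r, betaP x j * Real.log (1 / gaussMap^[j] x))
      = ∑ j ∈ Finset.range r, betaP x j * Real.log (betaP x j / betaP x (j+1)) := by
    apply Finset.sum_congr rfl
    intro j _
    have hBne : betaP x j ≠ 0 := ne_of_gt (BrjAux.betaP_pos hx h0 h1 j)
    have hgne : gaussMap^[j] x ≠ 0 := ne_of_gt (BrjAux.iter_pos hx h0 h1 j)
    have : (1:ℝ) / gaussMap^[j] x = betaP x j / betaP x (j+1) := by
      rw [BrjAux.betaP_succ]
      field_simp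
    rw [this]
  rw [hS1, hS2, ← Finset.sum_sub_distrib]
  -- bound the sum of differences
  have hbound : |∑ j ∈ Finset.range r,
      (BrjAux.EE x (BrjAux.yr x r) j *
          Real.log (BrjAux.EE x (BrjAux.yr x r) j / BrjAux.EE x (BrjAux.yr x r) (j+1))
        - betaP x j * Real.log (betaP x j / betaP x (j+1)))|
      ≤ ∑ j ∈ Finset.range r, 5 * (qConv x (j+1) : ℝ) * |BrjAux.yr x r - x| := by
    refine le_trans (Finset.abs_sum_le_sum_abs _ _) ?_
    apply Finset.sum_le_sum
    intro j hj
    exact BrjAux.term_bound hx h0 h1 j (Finset.mem_range.mp hj)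
  have hsum_eq : ∑ j ∈ Finset.range r, 5 * (qConv x (j+1) : ℝ) * |BrjAux.yr x r - x|
      = 5 * (∑ j ∈ Finset.range r, (qConv x (j+1) : ℝ)) * |BrjAux.yr x r - x| := by
    rw [Finset.mul_sum, Finset.sum_mul]
  have hq3 : (∑ j ∈ Finset.range r, (qConv x (j+1) : ℝ)) ≤ 3 * (qConv x r : ℝ) := by
    have := BrjAux.q_sum3 hx h0 h1 hr
    push_cast
    exact_mod_cast this
  have hyx := BrjAux.yx_bound hx h0 h1 r
  have habs : (0:ℝ) ≤ |BrjAux.yr x r - x| := abs_nonneg _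
  have hqsum_nn : (0:ℝ) ≤ ∑ j ∈ Finset.range r, (qConv x (j+1) : ℝ) := by
    apply Finset.sum_nonneg
    intro j _
    exact (BrjAux.qr_pos hx h0 h1 (j+1)).le
  rw [le_div_iff₀ hQ]
  calc |∑ j ∈ Finset.range r,
      (BrjAux.EE x (BrjAux.yr x r) j *
          Real.log (BrjAux.EE x (BrjAux.yr x r) j / BrjAux.EE x (BrjAux.yr x r) (j+1))
        - betaP x j * Real.log (betaP x j / betaP x (j+1)))| * (qConv x r : ℝ)
      ≤ (5 * (∑ j ∈ Finset.range r, (qConv x (j+1) : ℝ)) * |BrjAux.yr x r - x|) * (qConv x r : ℝ) := by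
        apply mul_le_mul_of_nonneg_right _ hQ.le
        rw [← hsum_eq]
        exact hbound
    _ ≤ (5 * (3 * (qConv x r : ℝ)) * |BrjAux.yr x r - x|) * (qConv x r : ℝ) := by
        apply mul_le_mul_of_nonneg_right _ hQ.le
        apply mul_le_mul_of_nonneg_right _ habs
        nlinarith
    _ = 15 * (|BrjAux.yr x r - x| * ((qConv x r : ℝ) * (qConv x r : ℝ))) := by ring
    _ ≤ 15 * gaussMap^[r] x := by linarith
    _ = 15 * gaussMap^[r] x := rfl
end

section
/- There exists a constant C_k > 0 such that for every irrational x ∈ (0,1) and r ≥ 1, |W_finite(p_r/q_r) - Σ_{j=0}^{r-1} (-1)^j β_{j-1}(x) log(1/G^j(x))| ≤ C₁·G^r(x)/q_r(x), where W_finite(p/q) = Σ_{j=0}^{r-1}(-1)^j β_{j-1}(p/q) log(1/G^j(p/q)) is the finite Wilton sum of the rational p_r/q_r. -/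
open Finset Filter

/-- truncated Wilton sum of length `r`. -/
noncomputable def wiltonFinite (y : ℝ) (r : ℕ) : ℝ :=
  ∑ j ∈ Finset.range r, (-1 : ℝ) ^ j * betaP y j * Real.log (1 / gaussMap^[j] y)

namespace TW

variable {x : ℝ}

noncomputable def ww : ℝ := (Real.sqrt 2)⁻¹
noncomputable def PP (x : ℝ) (m : ℕ) : ℝ := ((convAux x m).2.1 : ℝ)
noncomputable def QQ (x : ℝ) (m : ℕ) : ℝ := ((convAux x m).2.2 : ℝ)
noncomputable def KK (x : ℝ) (r m : ℕ) : ℝ :=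
  (-1:ℝ)^(m+1) * (QQ x m * (pConv x r : ℝ) - PP x m * (qConv x r : ℝ))


lemma orbit (hx : Irrational x) (h0 : 0 < x) (h1 : x < 1) (n : ℕ) :
    Irrational (gaussMap^[n] x) ∧ 0 < gaussMap^[n] x ∧ gaussMap^[n] x < 1 := by
  induction n with
  | zero => exact ⟨hx, h0, h1⟩
  | succ n ih =>
    obtain ⟨hi, hp, hl⟩ := ih
    rw [Function.iterate_succ_apply']
    set t := gaussMap^[n] x with ht
    have hinv : Irrational (1 / t) := by rw [one_div]; exact hi.inv
    have hfr : Irrational (gaussMap t) := by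
      unfold gaussMap Int.fract
      exact Irrational.sub_intCast hinv _
    refine ⟨hfr, ?_, Int.fract_lt_one _⟩
    rcases lt_or_eq_of_le (Int.fract_nonneg (1/t)) with h | h
    · exact h
    · exact absurd (show Irrational (0:ℝ) by rw [show (0:ℝ) = gaussMap t from h]; exact hfr)
        not_irrational_zero

lemma t_pos (hx : Irrational x) (h0 : 0 < x) (h1 : x < 1) (n : ℕ) : 0 < gaussMap^[n] x :=
  (orbit hx h0 h1 n).2.1

lemma t_lt_one (hx : Irrational x) (h0 : 0 < x) (h1 : x < 1) (n : ℕ) : gaussMap^[n] x < 1 :=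
  (orbit hx h0 h1 n).2.2

lemma digit_ge_one (hx : Irrational x) (h0 : 0 < x) (h1 : x < 1) (n : ℕ) :
    (1 : ℝ) ≤ (cfDigit x n : ℝ) := by
  have h := one_le_one_div (t_pos hx h0 h1 n) (t_lt_one hx h0 h1 n).le
  exact_mod_cast Int.le_floor.2 (by exact_mod_cast h)

lemma digit_le (hx : Irrational x) (h0 : 0 < x) (h1 : x < 1) (n : ℕ) :
    (cfDigit x n : ℝ) ≤ 1 / gaussMap^[n] x := Int.floor_le _

lemma digit_rec (hx : Irrational x) (h0 : 0 < x) (h1 : x < 1) (n : ℕ) :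
    gaussMap^[n+1] x = 1 / gaussMap^[n] x - (cfDigit x n : ℝ) := by
  rw [Function.iterate_succ_apply']
  rfl

/-- key: t n * (a n + t (n+1)) = 1 -/
lemma t_key (hx : Irrational x) (h0 : 0 < x) (h1 : x < 1) (n : ℕ) :
    gaussMap^[n] x * ((cfDigit x n : ℝ) + gaussMap^[n+1] x) = 1 := by
  have hne := (t_pos hx h0 h1 n).ne'
  rw [digit_rec hx h0 h1 n]
  field_simp
  ring

lemma betaP_succ (n : ℕ) : betaP x (n+1) = betaP x n * gaussMap^[n] x :=
  Finset.prod_range_succ _ _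

lemma betaP_pos (hx : Irrational x) (h0 : 0 < x) (h1 : x < 1) (n : ℕ) : 0 < betaP x n :=
  Finset.prod_pos fun i _ => t_pos hx h0 h1 i

lemma betaP_le_one (hx : Irrational x) (h0 : 0 < x) (h1 : x < 1) (n : ℕ) : betaP x n ≤ 1 :=
  Finset.prod_le_one (fun i _ => (t_pos hx h0 h1 i).le) (fun i _ => (t_lt_one hx h0 h1 i).le)

lemma pair_le (hx : Irrational x) (h0 : 0 < x) (h1 : x < 1) (n : ℕ) :
    gaussMap^[n] x * gaussMap^[n+1] x ≤ 1/2 := by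
  have hp := t_pos hx h0 h1 n
  have hp1 := t_pos hx h0 h1 (n+1)
  have hl1 := t_lt_one hx h0 h1 (n+1)
  have hk := t_key hx h0 h1 n
  have ha := digit_ge_one hx h0 h1 n
  rcases le_or_gt (gaussMap^[n] x) (1/2) with h | h
  · nlinarith
  · nlinarith



lemma sqrt2_pos : (0:ℝ) < Real.sqrt 2 := Real.sqrt_pos.2 (by norm_num)
lemma ww_pos : (0:ℝ) < ww := inv_pos.2 sqrt2_pos
lemma ww_sq : ww^2 = 1/2 := by
  rw [ww, inv_pow, Real.sq_sqrt (by norm_num : (0:ℝ) ≤ 2)]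
  norm_num
lemma ww_le : ww ≤ 3/4 := by
  have h : (4/3:ℝ) ≤ Real.sqrt 2 := by
    rw [show (4/3:ℝ) = Real.sqrt ((4/3)^2) from (Real.sqrt_sq (by norm_num)).symm]
    apply Real.sqrt_le_sqrt; norm_num
  rw [ww, inv_le_comm₀ sqrt2_pos (by norm_num : (0:ℝ) < 3/4)]
  have h34 : ((3:ℝ)/4)⁻¹ = 4/3 := by norm_num
  rw [h34]; exact h
lemma sqrt2_le : Real.sqrt 2 ≤ 3/2 := by
  rw [show (3/2:ℝ) = Real.sqrt ((3/2)^2) by rw [Real.sqrt_sq]; norm_num]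
  apply Real.sqrt_le_sqrt; norm_num

lemma prod_t_le (hx : Irrational x) (h0 : 0 < x) (h1 : x < 1) :
    ∀ (m j : ℕ), (∏ i ∈ Finset.range m, gaussMap^[j+i] x) ≤ Real.sqrt 2 * ww ^ m := by
  intro m
  induction m using Nat.twoStepInduction with
  | zero =>
    intro j
    simpa using (by nlinarith [sqrt2_le, sqrt2_pos] : (1:ℝ) ≤ Real.sqrt 2)
  | one =>
    intro j
    have : Real.sqrt 2 * ww ^ 1 = 1 := by
      rw [pow_one, ww, mul_inv_cancel₀ sqrt2_pos.ne']
    rw [this]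
    simpa using (t_lt_one hx h0 h1 j).le
  | more m ih _ =>
    intro j
    have e : (∏ i ∈ Finset.range (m+2), gaussMap^[j+i] x)
        = (∏ i ∈ Finset.range m, gaussMap^[(j+2)+i] x) * (gaussMap^[j] x * gaussMap^[j+1] x) := by
      rw [Finset.prod_range_succ', Finset.prod_range_succ']
      have : ∀ i:ℕ, j + (i+1+1) = (j+2)+i := by omega
      rw [Finset.prod_congr rfl (fun i _ => by rw [this i])]
      simp [add_assoc]
      ring
    rw [e]
    have h2 := pair_le hx h0 h1 j
    have hprod := ih (j+2)
    have hprodpos : (0:ℝ) ≤ ∏ i ∈ Finset.range m, gaussMap^[(j+2)+i] x :=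
      Finset.prod_nonneg fun i _ => (t_pos hx h0 h1 _).le
    have hpp : (0:ℝ) ≤ gaussMap^[j] x * gaussMap^[j+1] x :=
      mul_nonneg (t_pos hx h0 h1 _).le (t_pos hx h0 h1 _).le
    calc (∏ i ∈ Finset.range m, gaussMap^[(j+2)+i] x) * (gaussMap^[j] x * gaussMap^[j+1] x)
        ≤ (Real.sqrt 2 * ww ^ m) * (1/2) := by
          apply mul_le_mul hprod h2 hpp
          exact mul_nonneg sqrt2_pos.le (pow_nonneg ww_pos.le m)
      _ = Real.sqrt 2 * ww ^ (m+2) := by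
          rw [pow_add, ww_sq]; ring


lemma PP0 : PP x 0 = 1 := by simp [PP, convAux]
lemma QQ0 : QQ x 0 = 0 := by simp [QQ, convAux]
lemma PP1 : PP x 1 = 0 := by simp [PP, convAux]
lemma QQ1 : QQ x 1 = 1 := by simp [QQ, convAux]
lemma PP_rec (m : ℕ) : PP x (m+2) = (cfDigit x m : ℝ) * PP x (m+1) + PP x m := by
  show ((convAux x (m+2)).2.1 : ℝ) = _
  have h2 : (convAux x (m+2)).2 = (convAux x (m+1)).1 := rfl
  have h1 : (convAux x (m+1)).2 = (convAux x m).1 := rfl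
  rw [h2, show (convAux x (m+1)).1 = (cfDigit x m * (convAux x m).1.1 + (convAux x m).2.1,
        cfDigit x m * (convAux x m).1.2 + (convAux x m).2.2) from rfl]
  rw [PP, PP, h1]
  push_cast
  ring
lemma QQ_rec (m : ℕ) : QQ x (m+2) = (cfDigit x m : ℝ) * QQ x (m+1) + QQ x m := by
  show ((convAux x (m+2)).2.2 : ℝ) = _
  have h2 : (convAux x (m+2)).2 = (convAux x (m+1)).1 := rfl
  have h1 : (convAux x (m+1)).2 = (convAux x m).1 := rfl
  rw [h2, show (convAux x (m+1)).1 = (cfDigit x m * (convAux x m).1.1 + (convAux x m).2.1,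
        cfDigit x m * (convAux x m).1.2 + (convAux x m).2.2) from rfl]
  rw [QQ, QQ, h1]
  push_cast
  ring

lemma Q_facts (hx : Irrational x) (h0 : 0 < x) (h1 : x < 1) :
    ∀ m : ℕ, 0 ≤ QQ x m ∧ 1 ≤ QQ x (m+1) ∧ QQ x m ≤ QQ x (m+1) := by
  intro m
  induction m with
  | zero => rw [QQ0, QQ1]; norm_num
  | succ m ih =>
    obtain ⟨ha, hb, hc⟩ := ih
    have hd := digit_ge_one hx h0 h1 m
    rw [QQ_rec m]
    refine ⟨by linarith, by nlinarith, by nlinarith⟩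

lemma beta_id (hx : Irrational x) (h0 : 0 < x) (h1 : x < 1) :
    ∀ m : ℕ, PP x m - QQ x m * x = (-1:ℝ)^m * betaP x m := by
  intro m
  induction m using Nat.twoStepInduction with
  | zero => rw [PP0, QQ0]; simp [betaP]
  | one => rw [PP1, QQ1]; simp [betaP]
  | more m ih1 ih2 =>
    have hkey := t_key hx h0 h1 m
    have hb1 : betaP x (m+1) = betaP x m * gaussMap^[m] x := betaP_succ m
    have hb2 : betaP x (m+2) = betaP x (m+1) * gaussMap^[m+1] x := betaP_succ (m+1)
    rw [PP_rec m, QQ_rec m, pow_succ, pow_succ]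
    rw [hb2, hb1]
    rw [hb1] at ih2
    rw [pow_succ] at ih2
    linear_combination (cfDigit x m : ℝ) * ih2 + ih1 - ((-1:ℝ)^m * betaP x m) * hkey

lemma det_id (m : ℕ) : PP x (m+1) * QQ x m - PP x m * QQ x (m+1) = (-1:ℝ)^(m+1) := by
  induction m with
  | zero => rw [PP1, QQ0, PP0, QQ1]; norm_num
  | succ m ih =>
    rw [PP_rec m, QQ_rec m, pow_succ]
    linear_combination (-1:ℝ) * ih

lemma beta_inv (hx : Irrational x) (h0 : 0 < x) (h1 : x < 1) (m : ℕ) :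
    betaP x m * (QQ x (m+1) + QQ x m * gaussMap^[m] x) = 1 := by
  have h1' := beta_id hx h0 h1 m
  have h2 := beta_id hx h0 h1 (m+1)
  have hd := det_id (x := x) m
  have hb : betaP x (m+1) = betaP x m * gaussMap^[m] x := betaP_succ m
  have hs : ((-1:ℝ)^(m+1)) ≠ 0 := by positivity
  apply mul_left_cancel₀ hs
  rw [pow_succ] at *
  rw [hb] at h2
  linear_combination QQ x (m+1) * h1' - QQ x m * h2 + hd

lemma betaQ_le (hx : Irrational x) (h0 : 0 < x) (h1 : x < 1) (m : ℕ) :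
    betaP x m * QQ x (m+1) ≤ 1 := by
  have h := beta_inv hx h0 h1 m
  have hq := (Q_facts hx h0 h1 m).1
  have ht := (t_pos hx h0 h1 m).le
  have hb := (betaP_pos hx h0 h1 m).le
  nlinarith [mul_nonneg (mul_nonneg hb hq) ht]

lemma betaQ'_le (hx : Irrational x) (h0 : 0 < x) (h1 : x < 1) (m : ℕ) :
    betaP x m * QQ x m ≤ 1 := by
  have h := betaQ_le hx h0 h1 m
  have hq := (Q_facts hx h0 h1 m).2.2
  have hb := (betaP_pos hx h0 h1 m).le
  nlinarith


/-- pConv/qConv as PP/QQ at the next index -/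
lemma PP_conv (x : ℝ) (r : ℕ) : PP x (r+1) = (pConv x r : ℝ) := rfl
lemma QQ_conv (x : ℝ) (r : ℕ) : QQ x (r+1) = (qConv x r : ℝ) := rfl

/-- reversed continuant: `KK x r m = K(a_m, ..., a_{r-1})`, so that
`KK x r 0 = q_r`, `KK x r r = 1`, `KK x r (r+1) = 0`. -/

lemma KK0 (x : ℝ) (r : ℕ) : KK x r 0 = (qConv x r : ℝ) := by
  simp [KK, QQ0, PP0]
lemma KK1 (x : ℝ) (r : ℕ) : KK x r 1 = (pConv x r : ℝ) := by
  simp [KK, QQ1, PP1]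
lemma KK_top (x : ℝ) (r : ℕ) : KK x r (r+1) = 0 := by
  rw [KK, PP_conv, QQ_conv]; ring
lemma KK_r (x : ℝ) (r : ℕ) : KK x r r = 1 := by
  have hd := det_id (x := x) r
  have hsq : ((-1:ℝ)^(r+1)) * ((-1:ℝ)^(r+1)) = 1 := by
    rw [← pow_add, ← two_mul, pow_mul]; norm_num
  rw [KK, ← PP_conv, ← QQ_conv]
  calc (-1:ℝ)^(r+1) * (QQ x r * PP x (r+1) - PP x r * QQ x (r+1))
      = (-1:ℝ)^(r+1) * ((-1:ℝ)^(r+1)) := by rw [← hd]; ring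
    _ = 1 := hsq

lemma KK_rec (x : ℝ) (r m : ℕ) :
    KK x r m = (cfDigit x m : ℝ) * KK x r (m+1) + KK x r (m+2) := by
  rw [KK, KK, KK, PP_rec, QQ_rec, pow_succ, pow_succ]
  ring

lemma KK_down (hx : Irrational x) (h0 : 0 < x) (h1 : x < 1) (r : ℕ) :
    ∀ m : ℕ, m ≤ r → 1 ≤ KK x r m ∧ KK x r (m+1) ≤ KK x r m ∧ 0 ≤ KK x r (m+1) := by
  suffices h : ∀ d m : ℕ, m + d = r → 1 ≤ KK x r m ∧ KK x r (m+1) ≤ KK x r m ∧ 0 ≤ KK x r (m+1) by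
    intro m hm
    exact h (r - m) m (by omega)
  intro d
  induction d with
  | zero =>
    intro m hm
    rw [Nat.add_zero] at hm
    subst hm
    rw [KK_r, KK_top]
    norm_num
  | succ d ih =>
    intro m hm
    obtain ⟨h1', h2', h3'⟩ := ih (m+1) (by omega)
    have ha := digit_ge_one hx h0 h1 m
    have hrec := KK_rec x r m
    refine ⟨by nlinarith, by nlinarith, by linarith⟩

lemma KK_strict (hx : Irrational x) (h0 : 0 < x) (h1 : x < 1) {r m : ℕ} (hm : m + 2 ≤ r) :
    KK x r (m+1) + 1 ≤ KK x r m := by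
  have h2 := (KK_down hx h0 h1 r (m+2) (by omega)).1
  have h1' := (KK_down hx h0 h1 r (m+1) (by omega)).1
  have ha := digit_ge_one hx h0 h1 m
  have hrec := KK_rec x r m
  nlinarith

lemma phi_id (x : ℝ) (r : ℕ) :
    ∀ m : ℕ, QQ x (m+1) * KK x r m + QQ x m * KK x r (m+1) = (qConv x r : ℝ) := by
  intro m
  induction m with
  | zero => rw [QQ1, QQ0, KK0]; ring
  | succ m ih =>
    have hq := QQ_rec (x := x) m
    have hk := KK_rec x r m
    linear_combination ih + KK x r (m+1) * hq - QQ x (m+1) * hk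

/-- lower bound for KK from the invariant -/
lemma KK_lower (hx : Irrational x) (h0 : 0 < x) (h1 : x < 1) {r m : ℕ} (hm : m ≤ r) :
    (qConv x r : ℝ) ≤ 2 * QQ x (m+1) * KK x r m := by
  have hphi := phi_id x r m
  have hk := (KK_down hx h0 h1 r m hm)
  have hq := Q_facts hx h0 h1 m
  nlinarith [hq.2.2, hk.2.1, hk.1, hq.1, hq.2.1]


section Y

lemma orbY (hx : Irrational x) (h0 : 0 < x) (h1 : x < 1) (r : ℕ) :
    ∀ j : ℕ, j + 1 ≤ r →
      (∀ i, i < j → gaussMap^[i] ((pConv x r : ℝ)/(qConv x r : ℝ)) = KK x r (i+1) / KK x r i) ∧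
      (gaussMap^[j] ((pConv x r : ℝ)/(qConv x r : ℝ)) = KK x r (j+1) / KK x r j ∨
        (gaussMap^[j] ((pConv x r : ℝ)/(qConv x r : ℝ)) = 0 ∧ KK x r (j+1) = KK x r j)) := by
  set y : ℝ := (pConv x r : ℝ)/(qConv x r : ℝ) with hy
  intro j
  induction j with
  | zero =>
    intro _
    refine ⟨fun i hi => absurd hi (Nat.not_lt_zero i), Or.inl ?_⟩
    rw [Function.iterate_zero_apply, hy, KK0, KK1]
  | succ j ih =>
    intro hj
    obtain ⟨hprev, hcase⟩ := ih (by omega)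
    have hstrict := KK_strict hx h0 h1 (r := r) (m := j) (by omega)
    have htj : gaussMap^[j] y = KK x r (j+1) / KK x r j := by
      rcases hcase with h | ⟨_, heq⟩
      · exact h
      · linarith
    have hK1 : 1 ≤ KK x r (j+1) := (KK_down hx h0 h1 r (j+1) (by omega)).1
    have hK2le : KK x r (j+2) ≤ KK x r (j+1) := (KK_down hx h0 h1 r (j+1) (by omega)).2.1
    have hK2nn : 0 ≤ KK x r (j+2) := (KK_down hx h0 h1 r (j+1) (by omega)).2.2
    have hK1ne : KK x r (j+1) ≠ 0 := by linarith
    refine ⟨?_, ?_⟩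
    · intro i hi
      rcases Nat.lt_or_ge i j with h | h
      · exact hprev i h
      · have : i = j := by omega
        rw [this]; exact htj
    · have hstep : gaussMap^[j+1] y = Int.fract (KK x r (j+2) / KK x r (j+1)) := by
        rw [Function.iterate_succ_apply', htj]
        unfold gaussMap
        rw [one_div_div]
        have hsplit : KK x r j / KK x r (j+1)
            = (cfDigit x j : ℝ) + KK x r (j+2) / KK x r (j+1) := by
          rw [KK_rec x r j]
          field_simp
        rw [hsplit, Int.fract_intCast_add]
      rcases lt_or_eq_of_le (div_le_one_of_le₀ hK2le (by linarith)) with hlt | heq1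
      · left
        rw [hstep, Int.fract_eq_self.2 ⟨div_nonneg hK2nn (by linarith), hlt⟩]
      · right
        have : KK x r (j+2) = KK x r (j+1) := by
          field_simp at heq1
          linarith [heq1]
        refine ⟨?_, this⟩
        rw [hstep, heq1, Int.fract_one]

lemma betaP_y (hx : Irrational x) (h0 : 0 < x) (h1 : x < 1) (r : ℕ) :
    ∀ j : ℕ, j + 1 ≤ r →
      betaP ((pConv x r : ℝ)/(qConv x r : ℝ)) j = KK x r j / (qConv x r : ℝ) := by
  have hq1 : 1 ≤ (qConv x r : ℝ) := by
    have := (KK_down hx h0 h1 r 0 (Nat.zero_le r)).1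
    rwa [KK0] at this
  intro j
  induction j with
  | zero =>
    intro _
    rw [KK0]
    simp [betaP]
    rw [div_self (by linarith)]
  | succ j ih =>
    intro hj
    have hKj : 1 ≤ KK x r j := (KK_down hx h0 h1 r j (by omega)).1
    have htj := (orbY hx h0 h1 r (j+1) hj).1 j (Nat.lt_succ_self j)
    rw [betaP_succ, ih (by omega), htj]
    field_simp

lemma log_y (hx : Irrational x) (h0 : 0 < x) (h1 : x < 1) (r : ℕ) :
    ∀ j : ℕ, j + 1 ≤ r →
      Real.log (1 / gaussMap^[j] ((pConv x r : ℝ)/(qConv x r : ℝ)))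
        = Real.log (KK x r j / KK x r (j+1)) := by
  intro j hj
  rcases (orbY hx h0 h1 r j hj).2 with h | ⟨h0', heq⟩
  · rw [h, one_div_div]
  · have hKj : 1 ≤ KK x r j := (KK_down hx h0 h1 r j (by omega)).1
    rw [h0', heq, div_self (by linarith), div_zero, Real.log_zero, Real.log_one]

lemma wilton_y (hx : Irrational x) (h0 : 0 < x) (h1 : x < 1) (r : ℕ) :
    wiltonFinite ((pConv x r : ℝ)/(qConv x r : ℝ)) r
      = ∑ j ∈ Finset.range r, (-1:ℝ)^j * (KK x r j / (qConv x r : ℝ))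
          * Real.log (KK x r j / KK x r (j+1)) := by
  unfold wiltonFinite
  apply Finset.sum_congr rfl
  intro j hj
  have hj' : j + 1 ≤ r := Finset.mem_range.1 hj
  rw [betaP_y hx h0 h1 r j hj', log_y hx h0 h1 r j hj']

end Y

/-! helper real lemmas -/

lemma log_ratio {a b : ℝ} (ha : 0 < a) (hb : 0 < b) :
    Real.log b - Real.log a ≤ (b - a)/a := by
  have h := Real.log_le_sub_one_of_pos (div_pos hb ha)
  rw [Real.log_div hb.ne' ha.ne'] at h
  have h2 : b/a - 1 = (b-a)/a := by field_simp
  linarith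

lemma log_diff_le {A B d : ℝ} (hB : 0 < B) (hd : |A - B| ≤ d) (hd2 : d ≤ B/2) :
    |Real.log B - Real.log A| ≤ 2*d/B := by
  have hdd : 0 ≤ d := le_trans (abs_nonneg _) hd
  obtain ⟨hL, hR⟩ := abs_le.1 hd
  have hA : 0 < A := by linarith
  rcases le_total A B with h | h
  · rw [abs_of_nonneg (sub_nonneg.2 (Real.log_le_log hA h))]
    have h1 := log_ratio hA hB
    have h2 : (B - A)/A ≤ 2*d/B := by
      rw [div_le_div_iff₀ hA (by linarith)]
      nlinarith
    linarith
  · rw [abs_of_nonpos (sub_nonpos.2 (Real.log_le_log hB h))]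
    have h1 := log_ratio hB hA
    have h2 : (A - B)/B ≤ 2*d/B := (div_le_div_iff_of_pos_right hB).2 (by linarith)
    linarith

lemma mul_log_diff_le {A B d : ℝ} (hB : 0 < B) (hd : |A - B| ≤ d) (hd2 : d ≤ B/2) :
    A * |Real.log B - Real.log A| ≤ 3 * d := by
  have hdd : 0 ≤ d := le_trans (abs_nonneg _) hd
  obtain ⟨hL, hR⟩ := abs_le.1 hd
  have hA : 0 < A := by linarith
  rcases le_total A B with h | h
  · rw [abs_of_nonneg (sub_nonneg.2 (Real.log_le_log hA h))]
    have h1 := log_ratio hA hB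
    have : A * (Real.log B - Real.log A) ≤ A * ((B - A)/A) :=
      mul_le_mul_of_nonneg_left h1 hA.le
    have h2 : A * ((B - A)/A) = B - A := by field_simp
    nlinarith
  · rw [abs_of_nonpos (sub_nonpos.2 (Real.log_le_log hB h))]
    have h1 := log_ratio hB hA
    have h3 : A * (Real.log A - Real.log B) ≤ A * ((A - B)/B) :=
      mul_le_mul_of_nonneg_left h1 hA.le
    have h4 : A * ((A - B)/B) ≤ 3 * d := by
      rw [mul_div_assoc']
      rw [div_le_iff₀ hB]
      nlinarith
    nlinarith

/-! the difference identity -/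

lemma diff_eq (hx : Irrational x) (h0 : 0 < x) (h1 : x < 1) (r j : ℕ) :
    KK x r j - betaP x j * (qConv x r : ℝ)
      = (-1:ℝ)^(j+r) * (QQ x j * betaP x (r+1)) := by
  have hj := beta_id hx h0 h1 j
  have hr := beta_id hx h0 h1 (r+1)
  rw [PP_conv, QQ_conv] at hr
  show (-1:ℝ)^(j+1) * (QQ x j * (pConv x r : ℝ) - PP x j * (qConv x r : ℝ)) - _ = _
  rcases Nat.even_or_odd j with hevj | hodj <;> rcases Nat.even_or_odd r with hevr | hodr
  · rw [hevj.neg_one_pow] at hj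
    rw [(hevr.add_one).neg_one_pow] at hr
    rw [(hevj.add_one).neg_one_pow, (hevj.add hevr).neg_one_pow]
    linear_combination (qConv x r : ℝ) * hj - QQ x j * hr
  · rw [hevj.neg_one_pow] at hj
    rw [(hodr.add_one).neg_one_pow] at hr
    rw [(hevj.add_one).neg_one_pow, (hevj.add_odd hodr).neg_one_pow]
    linear_combination (qConv x r : ℝ) * hj - QQ x j * hr
  · rw [hodj.neg_one_pow] at hj
    rw [(hevr.add_one).neg_one_pow] at hr
    rw [(hodj.add_one).neg_one_pow, (hodj.add_even hevr).neg_one_pow]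
    linear_combination -(qConv x r : ℝ) * hj + QQ x j * hr
  · rw [hodj.neg_one_pow] at hj
    rw [(hodr.add_one).neg_one_pow] at hr
    rw [(hodj.add_one).neg_one_pow, (hodj.add_odd hodr).neg_one_pow]
    linear_combination -(qConv x r : ℝ) * hj + QQ x j * hr


lemma beta_split (x : ℝ) (m n : ℕ) :
    betaP x (m + n) = betaP x m * ∏ i ∈ Finset.range n, gaussMap^[m+i] x := by
  rw [betaP, betaP, Finset.prod_range_add]

lemma ww_shift (m : ℕ) : Real.sqrt 2 * ww ^ m = 2 * ww ^ (m+1) := by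
  have hss : Real.sqrt 2 * Real.sqrt 2 = 2 := Real.mul_self_sqrt (by norm_num)
  rw [pow_succ, ww]
  field_simp
  linear_combination hss


lemma aux1 {a q t : ℝ} (h : a*q ≤ 1) (ha : 0 ≤ a) (hq : 0 ≤ q) (ht0 : 0 ≤ t) (ht1 : t ≤ 1) :
    q * (a * t) ≤ 1 := by nlinarith

lemma aux1' {a b c : ℝ} (h : a*b ≤ 1) (hc : 0 ≤ c) (ha0 : 0 ≤ a) (hb0 : 0 ≤ b) :
    a * (b * c) ≤ 1 * c := by nlinarith

lemma aux2 {p w t c : ℝ} (hp : p ≤ Real.sqrt 2 * w) (ht : 0 ≤ t) (hw : 0 ≤ w)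
    (hc : Real.sqrt 2 ≤ c) (hp0 : 0 ≤ p) : p * t ≤ (c * w) * t := by
  calc p * t ≤ (Real.sqrt 2 * w) * t := mul_le_mul_of_nonneg_right hp ht
    _ ≤ (c * w) * t := mul_le_mul_of_nonneg_right (mul_le_mul_of_nonneg_right hc hw) ht

lemma aux3 {u v : ℝ} (hu0 : 0 ≤ u) (hu : u ≤ 1/2) (hv0 : 0 ≤ v) (hv1 : v ≤ 1) :
    u * v ≤ 1/2 := by nlinarith

lemma aux1'' {a b c : ℝ} (h : a*b ≤ 1) (hc : 0 ≤ c) (ha0 : 0 ≤ a) (hb0 : 0 ≤ b) :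
    a * (b * c) ≤ c := by nlinarith

lemma abs_diff (hx : Irrational x) (h0 : 0 < x) (h1 : x < 1) (r m : ℕ) :
    |betaP x m - KK x r m / (qConv x r : ℝ)| = QQ x m * betaP x (r+1) / (qConv x r : ℝ) := by
  have hq1 : (1:ℝ) ≤ (qConv x r : ℝ) := by
    have h := (KK_down hx h0 h1 r 0 (Nat.zero_le r)).1
    rwa [KK0] at h
  have hqpos : (0:ℝ) < (qConv x r : ℝ) := by linarith
  have e := diff_eq hx h0 h1 r m
  have hQ0 : 0 ≤ QQ x m := (Q_facts hx h0 h1 m).1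
  have hbr1 : 0 < betaP x (r+1) := betaP_pos hx h0 h1 (r+1)
  have hB0A0 : KK x r m / (qConv x r : ℝ) - betaP x m
      = (-1:ℝ)^(m+r) * (QQ x m * betaP x (r+1)) / (qConv x r : ℝ) := by
    field_simp
    linear_combination e
  rw [abs_sub_comm, hB0A0, abs_div, abs_mul, abs_pow, abs_neg, abs_one, one_pow, one_mul,
      abs_of_nonneg (mul_nonneg hQ0 hbr1.le), abs_of_nonneg hqpos.le]

lemma per_term (hx : Irrational x) (h0 : 0 < x) (h1 : x < 1) {r j : ℕ} (hjr : j + 1 ≤ r) :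
    |KK x r j / (qConv x r : ℝ) * Real.log (KK x r j / KK x r (j+1))
      - betaP x j * Real.log (1 / gaussMap^[j] x)|
    ≤ 15 * ww ^ (r-1-j) * gaussMap^[r] x / (qConv x r : ℝ) := by
  have hq1 : (1:ℝ) ≤ (qConv x r : ℝ) := by
    have h := (KK_down hx h0 h1 r 0 (Nat.zero_le r)).1
    rwa [KK0] at h
  set qr : ℝ := (qConv x r : ℝ) with hqr
  set K0 := KK x r j with hK0def
  set K1 := KK x r (j+1) with hK1def
  set A0 := betaP x j with hA0def
  set A1 := betaP x (j+1) with hA1def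
  set tj := gaussMap^[j] x with htjdef
  set tr := gaussMap^[r] x with htrdef
  set br1 := betaP x (r+1) with hbr1def
  have hqpos : (0:ℝ) < qr := by linarith
  have hK0ge : (1:ℝ) ≤ K0 := (KK_down hx h0 h1 r j (by omega)).1
  have hK1ge : (1:ℝ) ≤ K1 := (KK_down hx h0 h1 r (j+1) hjr).1
  have hK10 : K1 ≤ K0 := (KK_down hx h0 h1 r j (by omega)).2.1
  have hK0pos : (0:ℝ) < K0 := by linarith
  have hK1pos : (0:ℝ) < K1 := by linarith
  have hA0pos : 0 < A0 := betaP_pos hx h0 h1 j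
  have hA1pos : 0 < A1 := betaP_pos hx h0 h1 (j+1)
  have htjpos : 0 < tj := t_pos hx h0 h1 j
  have htjlt : tj < 1 := t_lt_one hx h0 h1 j
  have htj1pos : 0 < gaussMap^[j+1] x := t_pos hx h0 h1 (j+1)
  have htrpos : 0 < tr := t_pos hx h0 h1 r
  have hbr1pos : 0 < br1 := betaP_pos hx h0 h1 (r+1)
  have hQ0 : 0 ≤ QQ x j := (Q_facts hx h0 h1 j).1
  have hQ1 : 0 ≤ QQ x (j+1) := (Q_facts hx h0 h1 (j+1)).1
  have hA1eq : A1 = A0 * tj := betaP_succ j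
  set J := r - 1 - j with hJ
  have hwJ : (0:ℝ) < ww ^ J := pow_pos ww_pos J
  set Pmid := ∏ i ∈ Finset.range J, gaussMap^[(j+1)+i] x with hPmid
  have hPmid0 : 0 ≤ Pmid := Finset.prod_nonneg fun i _ => (t_pos hx h0 h1 _).le
  have hPmidle : Pmid ≤ Real.sqrt 2 * ww ^ J := prod_t_le hx h0 h1 J (j+1)
  have hsplit : br1 = A1 * (Pmid * tr) := by
    have h := beta_split x (j+1) (r-j)
    rw [show (j+1) + (r-j) = r+1 by omega] at h
    rw [hbr1def, h]
    congr 1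
    rw [show r - j = J + 1 by omega, Finset.prod_range_succ,
        show (j+1) + J = r by omega]
  set Rest := ∏ i ∈ Finset.range J, gaussMap^[(j+2)+i] x with hRest
  have hRest0 : 0 ≤ Rest := Finset.prod_nonneg fun i _ => (t_pos hx h0 h1 _).le
  have hRest1 : Rest ≤ 1 := Finset.prod_le_one (fun i _ => (t_pos hx h0 h1 _).le)
      (fun i _ => (t_lt_one hx h0 h1 _).le)
  have hbeta2 : betaP x (j+2) = A0 * (tj * gaussMap^[j+1] x) := by
    rw [betaP_succ (j+1), ← hA1def, hA1eq]
    ring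
  have hsplit2 : br1 = (A0 * (tj * gaussMap^[j+1] x)) * Rest := by
    have h := beta_split x (j+2) J
    rw [show (j+2) + J = r + 1 by omega] at h
    rw [hbr1def, h, hbeta2]
  have hpair : tj * gaussMap^[j+1] x ≤ 1/2 := pair_le hx h0 h1 j
  have hQA0 : A0 * QQ x j ≤ 1 := betaQ'_le hx h0 h1 j
  have hQA0' : A0 * QQ x (j+1) ≤ 1 := betaQ_le hx h0 h1 j
  have habs : |A0 - K0/qr| = QQ x j * br1 / qr := abs_diff hx h0 h1 r j
  clear_value J qr K0 K1 A0 A1 tj tr br1 Pmid Rest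
  -- numerator bound for delta0
  have hnum0 : QQ x j * br1 ≤ (3/2) * (ww^J * tr) := by
    have c1 : QQ x j * (A0 * tj) ≤ 1 := aux1 hQA0 hA0pos.le hQ0 htjpos.le htjlt.le
    have c2 : Pmid * tr ≤ ((3/2) * ww^J) * tr :=
      aux2 hPmidle htrpos.le (pow_nonneg ww_pos.le J) sqrt2_le hPmid0
    have c3 : QQ x j * br1 = (QQ x j * (A0 * tj)) * (Pmid * tr) := by
      rw [hsplit, hA1eq]; ring
    rw [c3]
    calc (QQ x j * (A0 * tj)) * (Pmid * tr) ≤ 1 * (((3/2) * ww^J) * tr) := by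
          apply mul_le_mul c1 c2 (mul_nonneg hPmid0 htrpos.le) (by norm_num)
      _ = (3/2) * (ww^J * tr) := by ring
  have hhalf0 : QQ x j * br1 ≤ 1/2 := by
    have c3 : QQ x j * br1 = (A0 * QQ x j) * ((tj * gaussMap^[j+1] x) * Rest) := by
      rw [hsplit2]; ring
    rw [c3]
    have c4 : (tj * gaussMap^[j+1] x) * Rest ≤ 1/2 :=
      aux3 (mul_nonneg htjpos.le htj1pos.le) hpair hRest0 hRest1
    calc (A0 * QQ x j) * ((tj * gaussMap^[j+1] x) * Rest) ≤ 1 * (1/2) := by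
          apply mul_le_mul hQA0 c4 (mul_nonneg (mul_nonneg htjpos.le htj1pos.le) hRest0) (by norm_num)
      _ = 1/2 := by norm_num
  -- decomposition
  have hlogB : Real.log (K0/K1) = Real.log (K0/qr) - Real.log (K1/qr) := by
    rw [Real.log_div hK0pos.ne' hK1pos.ne', Real.log_div hK0pos.ne' hqpos.ne',
        Real.log_div hK1pos.ne' hqpos.ne']
    ring
  have hlogA : Real.log (1/tj) = Real.log A0 - Real.log A1 := by
    rw [one_div, Real.log_inv, hA1eq, Real.log_mul hA0pos.ne' htjpos.ne']
    ring
  have key : K0/qr * Real.log (K0/K1) - A0 * Real.log (1/tj)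
      = (K0/qr - A0) * Real.log (K0/K1)
        + A0 * (Real.log (K0/qr) - Real.log A0)
        - A0 * (Real.log (K1/qr) - Real.log A1) := by
    rw [hlogB, hlogA]
    ring
  -- Bound I
  have hI : |K0/qr - A0| * |Real.log (K0/K1)| ≤ 2 * (ww^J * tr/qr) := by
    have hLnn : 0 ≤ Real.log (K0/K1) := Real.log_nonneg ((one_le_div hK1pos).2 hK10)
    have hKrec : K0 = (cfDigit x j : ℝ) * K1 + KK x r (j+2) := by
      rw [hK0def, hK1def]; exact KK_rec x r j
    have hK2le : KK x r (j+2) ≤ K1 := by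
      rw [hK1def]; exact (KK_down hx h0 h1 r (j+1) hjr).2.1
    have hdig := digit_ge_one hx h0 h1 j
    have hRle : K0/K1 ≤ (cfDigit x j : ℝ) + 1 := by
      rw [div_le_iff₀ hK1pos]
      linarith [hKrec, hK2le]
    have hLle : Real.log (K0/K1) ≤ 1/tj := by
      calc Real.log (K0/K1) ≤ Real.log ((cfDigit x j : ℝ) + 1) :=
            Real.log_le_log (div_pos hK0pos hK1pos) hRle
        _ ≤ ((cfDigit x j : ℝ) + 1) - 1 := Real.log_le_sub_one_of_pos (by linarith [hdig])
        _ = (cfDigit x j : ℝ) := by ring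
        _ ≤ 1/tj := by rw [htjdef]; exact digit_le hx h0 h1 j
    rw [abs_sub_comm, habs, abs_of_nonneg hLnn]
    have step1 : QQ x j * br1 / qr * Real.log (K0/K1) ≤ QQ x j * br1/qr * (1/tj) :=
      mul_le_mul_of_nonneg_left hLle (div_nonneg (mul_nonneg hQ0 hbr1pos.le) hqpos.le)
    have step2 : QQ x j * br1/qr * (1/tj) = (QQ x j * (A0 * 1)) * (Pmid * tr) / qr := by
      rw [hsplit, hA1eq]
      field_simp
    have hnum : (QQ x j * (A0 * 1)) * (Pmid * tr) ≤ 2 * (ww^J * tr) := by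
      have c1 : QQ x j * (A0 * 1) ≤ 1 := aux1 hQA0 hA0pos.le hQ0 (by norm_num) (by norm_num)
      have c2 : Pmid * tr ≤ (2 * ww^J) * tr :=
        aux2 hPmidle htrpos.le (pow_nonneg ww_pos.le J) (by linarith [sqrt2_le]) hPmid0
      calc (QQ x j * (A0 * 1)) * (Pmid * tr) ≤ 1 * ((2 * ww^J) * tr) := by
            apply mul_le_mul c1 c2 (mul_nonneg hPmid0 htrpos.le) (by norm_num)
        _ = 2 * (ww^J * tr) := by ring
    have step3 : (QQ x j * (A0 * 1)) * (Pmid * tr) / qr ≤ (2 * (ww^J * tr))/qr :=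
      (div_le_div_iff_of_pos_right hqpos).2 hnum
    calc QQ x j * br1 / qr * Real.log (K0/K1) ≤ QQ x j * br1/qr * (1/tj) := step1
      _ = (QQ x j * (A0 * 1)) * (Pmid * tr) / qr := step2
      _ ≤ (2 * (ww^J * tr))/qr := step3
      _ = 2 * (ww^J * tr/qr) := by ring
  -- Bound II
  have hd2 : QQ x j * br1/qr ≤ (K0/qr)/2 := by
    have h' : QQ x j * br1 ≤ K0/2 := by linarith
    calc QQ x j * br1/qr ≤ (K0/2)/qr := (div_le_div_iff_of_pos_right hqpos).2 h'
      _ = (K0/qr)/2 := by ring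
  have hII : A0 * |Real.log (K0/qr) - Real.log A0| ≤ 5 * (ww^J*tr/qr) := by
    have h3d := mul_log_diff_le (div_pos hK0pos hqpos) habs.le hd2
    have hq' : (QQ x j * br1)/qr ≤ ((3/2) * (ww^J * tr))/qr := (div_le_div_iff_of_pos_right hqpos).2 hnum0
    have hpos : (0:ℝ) ≤ ww^J * tr/qr := div_nonneg (mul_nonneg (pow_nonneg ww_pos.le J) htrpos.le) hqpos.le
    calc A0 * |Real.log (K0/qr) - Real.log A0| ≤ 3 * (QQ x j * br1/qr) := h3d
      _ ≤ 3 * ((3/2) * (ww^J*tr)/qr) := by linarith [hq']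
      _ = (9/2) * (ww^J*tr/qr) := by ring
      _ ≤ 5 * (ww^J*tr/qr) := by linarith [hpos]
  -- Bound III
  have hIII : A0 * |Real.log (K1/qr) - Real.log A1| ≤ 8 * (ww^J * tr/qr) := by
    rcases eq_or_lt_of_le hjr with hjr1 | hlt
    · -- j+1 = r
      have hJ0 : J = 0 := by omega
      have hK1one : K1 = 1 := by rw [hK1def, hjr1, KK_r]
      have hQr0 : 0 ≤ QQ x r := (Q_facts hx h0 h1 r).1
      have hinv : A1 * (qr + QQ x r * tr) = 1 := by
        have h := beta_inv hx h0 h1 r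
        rw [QQ_conv, ← hqr, ← htrdef] at h
        rw [hA1def, hjr1]
        exact h
      have hA1qr : A1 * qr ≤ 1 := by
        have hh : 0 ≤ A1 * (QQ x r * tr) := mul_nonneg hA1pos.le (mul_nonneg hQr0 htrpos.le)
        linarith [hinv, hh]
      have hA1leB : A1 ≤ K1/qr := by
        rw [hK1one, le_div_iff₀ hqpos]
        linarith
      have hlognn : 0 ≤ Real.log (K1/qr) - Real.log A1 :=
        sub_nonneg.2 (Real.log_le_log hA1pos hA1leB)
      have hchain : Real.log (K1/qr) - Real.log A1 ≤ QQ x r * (tr / qr) := by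
        have h := log_ratio hA1pos (div_pos hK1pos hqpos)
        have hfrac : (K1/qr - A1)/A1 = QQ x r * (tr/qr) := by
          rw [hK1one]
          field_simp
          linear_combination (-1:ℝ) * hinv
        linarith [h, hfrac.le, hfrac.ge]
      rw [abs_of_nonneg hlognn]
      have hA0Q : A0 * QQ x r ≤ 1 := by
        have := hQA0'
        rwa [hjr1] at this
      have htq : (0:ℝ) ≤ tr/qr := div_nonneg htrpos.le hqpos.le
      calc A0 * (Real.log (K1/qr) - Real.log A1) ≤ A0 * (QQ x r * (tr/qr)) :=
            mul_le_mul_of_nonneg_left hchain hA0pos.le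
        _ ≤ tr/qr := aux1'' hA0Q htq hA0pos.le hQr0
        _ ≤ 8 * (ww^J * tr/qr) := by
            rw [hJ0, pow_zero, one_mul]
            linarith [htq]
    · -- j + 2 ≤ r
      have hj2 : j + 2 ≤ r := hlt
      have habs1 : |A1 - K1/qr| = QQ x (j+1) * br1 / qr := by
        rw [hA1def, hK1def, hqr, hbr1def]
        exact abs_diff hx h0 h1 r (j+1)
      have htj2pos : 0 < gaussMap^[j+2] x := t_pos hx h0 h1 (j+2)
      have hpair1 : gaussMap^[j+1] x * gaussMap^[j+2] x ≤ 1/2 := pair_le hx h0 h1 (j+1)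
      have hA1Q : A1 * QQ x (j+1) ≤ 1 := by
        rw [hA1def]; exact betaQ'_le hx h0 h1 (j+1)
      set Rest4 := ∏ i ∈ Finset.range (r-2-j), gaussMap^[(j+3)+i] x with hRest4
      have hRest40 : 0 ≤ Rest4 := Finset.prod_nonneg fun i _ => (t_pos hx h0 h1 _).le
      have hRest41 : Rest4 ≤ 1 := Finset.prod_le_one (fun i _ => (t_pos hx h0 h1 _).le)
          (fun i _ => (t_lt_one hx h0 h1 _).le)
      have hsplit3 : br1 = (A1 * (gaussMap^[j+1] x * gaussMap^[j+2] x)) * Rest4 := by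
        have h := beta_split x (j+3) (r-2-j)
        rw [show (j+3) + (r-2-j) = r + 1 by omega] at h
        rw [hbr1def, h, show betaP x (j+3) = A1 * (gaussMap^[j+1] x * gaussMap^[j+2] x) by
          rw [betaP_succ (j+2), betaP_succ (j+1), ← hA1def]; ring]
      have hhalf1 : QQ x (j+1) * br1 ≤ 1/2 := by
        have c3 : QQ x (j+1) * br1
            = (A1 * QQ x (j+1)) * ((gaussMap^[j+1] x * gaussMap^[j+2] x) * Rest4) := by
          rw [hsplit3]; ring
        rw [c3]
        have c4 : (gaussMap^[j+1] x * gaussMap^[j+2] x) * Rest4 ≤ 1/2 :=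
          aux3 (mul_nonneg htj1pos.le htj2pos.le) hpair1 hRest40 hRest41
        calc (A1 * QQ x (j+1)) * ((gaussMap^[j+1] x * gaussMap^[j+2] x) * Rest4)
            ≤ 1 * (1/2) := by
              apply mul_le_mul hA1Q c4
                (mul_nonneg (mul_nonneg htj1pos.le htj2pos.le) hRest40) (by norm_num)
          _ = 1/2 := by norm_num
      have hd2' : QQ x (j+1) * br1/qr ≤ (K1/qr)/2 := by
        have h' : QQ x (j+1) * br1 ≤ K1/2 := by linarith
        calc QQ x (j+1) * br1/qr ≤ (K1/2)/qr := (div_le_div_iff_of_pos_right hqpos).2 h'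
          _ = (K1/qr)/2 := by ring
      have hlog := log_diff_le (div_pos hK1pos hqpos) habs1.le hd2'
      -- A0 * |...| ≤ A0 * (2 d / B1) = 2 A0 QQ(j+1) br1 / K1
      have he1 : 2 * (QQ x (j+1) * br1/qr) / (K1/qr) = 2 * (QQ x (j+1) * br1) / K1 := by
        field_simp
      have hstep : A0 * |Real.log (K1/qr) - Real.log A1|
          ≤ 2 * A0 * (QQ x (j+1) * br1) / K1 := by
        have := mul_le_mul_of_nonneg_left hlog hA0pos.le
        rw [he1] at this
        calc A0 * |Real.log (K1/qr) - Real.log A1|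
            ≤ A0 * (2 * (QQ x (j+1) * br1) / K1) := this
          _ = 2 * A0 * (QQ x (j+1) * br1) / K1 := by ring
      have hKlow : qr ≤ 2 * QQ x (j+2) * K1 := by
        have h := KK_lower hx h0 h1 (r := r) (m := j+1) hjr
        rwa [← hqr, ← hK1def] at h
      have hQ2 : 0 ≤ QQ x (j+2) := (Q_facts hx h0 h1 (j+2)).1
      have hcross : 2 * A0 * (QQ x (j+1) * br1) / K1
          ≤ 4 * ((A0 * QQ x (j+1)) * (QQ x (j+2) * br1)) / qr := by
        rw [div_le_div_iff₀ hK1pos hqpos]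
        have hc : 0 ≤ 2 * A0 * (QQ x (j+1) * br1) :=
          mul_nonneg (mul_nonneg (by norm_num) hA0pos.le) (mul_nonneg hQ1 hbr1pos.le)
        have h' := mul_le_mul_of_nonneg_left hKlow hc
        linarith [h']
      -- QQ(j+2) * br1 ≤ 2 ww^J tr
      have hQbr : QQ x (j+2) * br1 ≤ 2 * (ww^J * tr) := by
        set Pmid2 := ∏ i ∈ Finset.range (r-2-j), gaussMap^[(j+2)+i] x with hPmid2
        have hPmid20 : 0 ≤ Pmid2 := Finset.prod_nonneg fun i _ => (t_pos hx h0 h1 _).le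
        have hPmid2le : Pmid2 ≤ Real.sqrt 2 * ww ^ (r-2-j) := prod_t_le hx h0 h1 (r-2-j) (j+2)
        have hshift : Real.sqrt 2 * ww ^ (r-2-j) = 2 * ww ^ J := by
          rw [show J = (r-2-j) + 1 by omega]
          exact ww_shift (r-2-j)
        have hRestEq : Rest = Pmid2 * tr := by
          rw [hRest, htrdef, hPmid2, show J = (r-2-j) + 1 by omega, Finset.prod_range_succ,
              show (j+2) + (r-2-j) = r by omega]
        have hQb2 : QQ x (j+2) * betaP x (j+2) ≤ 1 := by
          have := betaQ'_le hx h0 h1 (j+2)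
          linarith
        have c3 : QQ x (j+2) * br1 = (QQ x (j+2) * betaP x (j+2)) * (Pmid2 * tr) := by
          rw [hsplit2, hRestEq, hbeta2]
          ring
        rw [c3]
        have hb2pos : 0 < betaP x (j+2) := betaP_pos hx h0 h1 (j+2)
        calc (QQ x (j+2) * betaP x (j+2)) * (Pmid2 * tr)
            ≤ 1 * ((2 * ww^J) * tr) := by
              apply mul_le_mul hQb2 ?_ (mul_nonneg hPmid20 htrpos.le) (by norm_num)
              rw [← hshift]
              exact mul_le_mul_of_nonneg_right hPmid2le htrpos.le
          _ = 2 * (ww^J * tr) := by ring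
      have hfinal : 4 * ((A0 * QQ x (j+1)) * (QQ x (j+2) * br1)) / qr ≤ 8 * (ww^J * tr/qr) := by
        have hnum : (A0 * QQ x (j+1)) * (QQ x (j+2) * br1) ≤ 1 * (2 * (ww^J * tr)) := by
          apply mul_le_mul hQA0' hQbr (by positivity) (by norm_num)
        have := (div_le_div_iff_of_pos_right hqpos).2
          (by linarith [hnum] : 4 * ((A0 * QQ x (j+1)) * (QQ x (j+2) * br1)) ≤ 8 * (ww^J * tr))
        calc 4 * ((A0 * QQ x (j+1)) * (QQ x (j+2) * br1)) / qr
            ≤ (8 * (ww^J * tr))/qr := this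
          _ = 8 * (ww^J * tr/qr) := by ring
      linarith
  -- combine
  have htri : |K0/qr * Real.log (K0/K1) - A0 * Real.log (1/tj)|
      ≤ |K0/qr - A0| * |Real.log (K0/K1)|
        + A0 * |Real.log (K0/qr) - Real.log A0|
        + A0 * |Real.log (K1/qr) - Real.log A1| := by
    rw [key]
    calc |(K0/qr - A0) * Real.log (K0/K1)
          + A0 * (Real.log (K0/qr) - Real.log A0)
          - A0 * (Real.log (K1/qr) - Real.log A1)|
        ≤ |(K0/qr - A0) * Real.log (K0/K1)
            + A0 * (Real.log (K0/qr) - Real.log A0)|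
          + |A0 * (Real.log (K1/qr) - Real.log A1)| := abs_sub _ _
      _ ≤ |(K0/qr - A0) * Real.log (K0/K1)|
          + |A0 * (Real.log (K0/qr) - Real.log A0)|
          + |A0 * (Real.log (K1/qr) - Real.log A1)| := by
            linarith [abs_add_le ((K0/qr - A0) * Real.log (K0/K1))
              (A0 * (Real.log (K0/qr) - Real.log A0))]
      _ = |K0/qr - A0| * |Real.log (K0/K1)|
          + A0 * |Real.log (K0/qr) - Real.log A0|
          + A0 * |Real.log (K1/qr) - Real.log A1| := by
            rw [abs_mul, abs_mul, abs_mul, abs_of_pos hA0pos]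
  calc |K0/qr * Real.log (K0/K1) - A0 * Real.log (1/tj)|
      ≤ |K0/qr - A0| * |Real.log (K0/K1)|
        + A0 * |Real.log (K0/qr) - Real.log A0|
        + A0 * |Real.log (K1/qr) - Real.log A1| := htri
    _ ≤ 2 * (ww^J * tr/qr) + 5 * (ww^J*tr/qr) + 8 * (ww^J * tr/qr) := by
        linarith
    _ = 15 * ww ^ J * tr / qr := by ring


lemma geo_le : ∀ n : ℕ, ∑ i ∈ Finset.range n, ww^i ≤ 4 := by
  intro n
  induction n with
  | zero => simp
  | succ n ih =>
    rw [Finset.sum_range_succ']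
    have he : ∑ i ∈ Finset.range n, ww^(i+1) = ww * ∑ i ∈ Finset.range n, ww^i := by
      rw [Finset.mul_sum]
      apply Finset.sum_congr rfl
      intro i _
      rw [pow_succ]
      ring
    rw [he, pow_zero]
    have hS0 : 0 ≤ ∑ i ∈ Finset.range n, ww^i :=
      Finset.sum_nonneg fun i _ => pow_nonneg ww_pos.le i
    have h := mul_le_mul ww_le ih hS0 (by norm_num : (0:ℝ) ≤ 3/4)
    linarith

end TW

theorem truncated_wilton_near_convergent :
    ∃ C : ℝ, 0 < C ∧ ∀ x : ℝ, Irrational x → 0 < x → x < 1 → ∀ r : ℕ, 1 ≤ r →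
      |wiltonFinite ((pConv x r : ℝ) / (qConv x r : ℝ)) r
          - ∑ j ∈ Finset.range r, (-1 : ℝ) ^ j * betaP x j * Real.log (1 / gaussMap^[j] x)|
        ≤ C * gaussMap^[r] x / (qConv x r : ℝ) := by
  refine ⟨64, by norm_num, ?_⟩
  intro x hx h0 h1 r hr
  have hq1 : (1:ℝ) ≤ (qConv x r : ℝ) := by
    have h := (TW.KK_down hx h0 h1 r 0 (Nat.zero_le r)).1
    rwa [TW.KK0] at h
  have hqpos : (0:ℝ) < (qConv x r : ℝ) := by linarith
  have htrpos : 0 < gaussMap^[r] x := TW.t_pos hx h0 h1 r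
  rw [TW.wilton_y hx h0 h1 r, ← Finset.sum_sub_distrib]
  have hsum : ∑ j ∈ Finset.range r, TW.ww^(r-1-j) ≤ 4 := by
    rw [Finset.sum_range_reflect (fun m => TW.ww^m) r]
    exact TW.geo_le r
  calc |∑ j ∈ Finset.range r,
        ((-1:ℝ)^j * (TW.KK x r j / (qConv x r : ℝ)) * Real.log (TW.KK x r j / TW.KK x r (j+1))
          - (-1:ℝ)^j * betaP x j * Real.log (1 / gaussMap^[j] x))|
      ≤ ∑ j ∈ Finset.range r,
        |(-1:ℝ)^j * (TW.KK x r j / (qConv x r : ℝ)) * Real.log (TW.KK x r j / TW.KK x r (j+1))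
          - (-1:ℝ)^j * betaP x j * Real.log (1 / gaussMap^[j] x)| :=
        Finset.abs_sum_le_sum_abs _ _
    _ ≤ ∑ j ∈ Finset.range r, 15 * TW.ww^(r-1-j) * gaussMap^[r] x / (qConv x r : ℝ) := by
        apply Finset.sum_le_sum
        intro j hj
        have hjr : j + 1 ≤ r := Finset.mem_range.1 hj
        have heq : (-1:ℝ)^j * (TW.KK x r j / (qConv x r : ℝ))
              * Real.log (TW.KK x r j / TW.KK x r (j+1))
            - (-1:ℝ)^j * betaP x j * Real.log (1 / gaussMap^[j] x)
            = (-1:ℝ)^j * (TW.KK x r j / (qConv x r : ℝ)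
                * Real.log (TW.KK x r j / TW.KK x r (j+1))
              - betaP x j * Real.log (1 / gaussMap^[j] x)) := by ring
        rw [heq, abs_mul, abs_pow, abs_neg, abs_one, one_pow, one_mul]
        exact TW.per_term hx h0 h1 hjr
    _ = (∑ j ∈ Finset.range r, TW.ww^(r-1-j)) * (15 * gaussMap^[r] x / (qConv x r : ℝ)) := by
        rw [Finset.sum_mul]
        apply Finset.sum_congr rfl
        intro j hj
        ring
    _ ≤ 4 * (15 * gaussMap^[r] x / (qConv x r : ℝ)) := by
        have hpos : (0:ℝ) ≤ 15 * gaussMap^[r] x / (qConv x r : ℝ) :=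
          div_nonneg (by nlinarith [htrpos.le]) hqpos.le
        exact mul_le_mul_of_nonneg_right hsum hpos
    _ ≤ 64 * gaussMap^[r] x / (qConv x r : ℝ) := by
        rw [show (64:ℝ) * gaussMap^[r] x / (qConv x r : ℝ)
            = (64 * gaussMap^[r] x) / (qConv x r : ℝ) from rfl]
        have : (4:ℝ) * (15 * gaussMap^[r] x / (qConv x r : ℝ))
            = (60 * gaussMap^[r] x) / (qConv x r : ℝ) := by ring
        rw [this]
        apply (div_le_div_iff_of_pos_right hqpos).2
        linarith [htrpos.le]
end
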